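/- arXiv:2511.23093 — 9 statements merged into one kernel-verified Lean document; each statement's English description precedes it below -/
import Mathlib

section
/- Let n ≤ m, let π be a permutation of [n] and let Π be a permutation of [m]. Then there exists an ordered homomorphism from the augmented ordered matching M'(π) to the augmented ordered matching M'(Π) if and only if Π contains π as a pattern. -/
/-- A permutation `P` of `[m]` contains a permutation `p` of `[n]` as a pattern. -/
def ContainsPattern {n m : ℕ} (P : Equiv.Perm (Fin m)) (p : Equiv.Perm (Fin n)) : Prop :=
  ∃ φ : Fin n ↪o Fin m, ∀ j k : Fin n, P (φ j) < P (φ k) ↔ p j < p k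

/-- The position, inside the augmented ordered matching `M'(σ)` on `6s` vertices,
of the `i`-th original vertex of `M(σ)` (0-indexed, `i < 2s`): two auxiliary
vertices are inserted in each gap between consecutive original vertices, and two
extra ones in the middle gap (between original vertices `s-1` and `s`). -/
def augPos (s i : ℕ) : ℕ := 3 * i + (if s ≤ i then 2 else 0)

lemma augPos_of_lt {s i : ℕ} (h : i < s) : augPos s i = 3 * i := by
  simp [augPos, Nat.not_le.mpr h]

lemma augPos_of_ge {s i : ℕ} (h : s ≤ i) : augPos s i = 3 * i + 2 := by
  simp [augPos, h]

/-- The ordered homomorphism on vertex positions, parameterized by the images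
`φf` of left original indices and `q` (the right-side order data). -/
def auxF (n m : ℕ) (φf q : ℕ → ℕ) (v : ℕ) : ℕ :=
  if v < 3*n then 3 * φf (v/3) + v % 3
  else if v = 3*n then 3*m
  else if v = 3*n+1 then 3*m+1
  else if (v - (3*n+2)) % 3 = 0 then 3*(m + q ((v - (3*n+2))/3)) + 2
  else 3*(m + q ((v - (3*n+2))/3 + 1)) + ((v - (3*n+2)) % 3 - 1)

lemma auxF_left {n m : ℕ} {φf q : ℕ → ℕ} {i r : ℕ} (hi : i < n) (hr : r < 3) :
    auxF n m φf q (3*i+r) = 3 * φf i + r := by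
  have h1 : 3*i+r < 3*n := by omega
  have h2 : (3*i+r)/3 = i := by omega
  have h3 : (3*i+r) % 3 = r := by omega
  rw [auxF, if_pos h1, h2, h3]

lemma auxF_mid0 {n m : ℕ} {φf q : ℕ → ℕ} : auxF n m φf q (3*n) = 3*m := by
  rw [auxF, if_neg (by omega), if_pos rfl]

lemma auxF_mid1 {n m : ℕ} {φf q : ℕ → ℕ} : auxF n m φf q (3*n+1) = 3*m+1 := by
  rw [auxF, if_neg (by omega), if_neg (by omega), if_pos rfl]

lemma auxF_rorig {n m : ℕ} {φf q : ℕ → ℕ} {j : ℕ} :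
    auxF n m φf q (3*(n+j)+2) = 3*(m + q j) + 2 := by
  have hw : 3*(n+j)+2 - (3*n+2) = 3*j := by omega
  rw [auxF, if_neg (by omega), if_neg (by omega), if_neg (by omega), hw,
    if_pos (by omega)]
  have h1 : (3*j)/3 = j := by omega
  rw [h1]

lemma auxF_raux {n m : ℕ} {φf q : ℕ → ℕ} {j r : ℕ} (hr1 : 1 ≤ r) (hr2 : r ≤ 2) :
    auxF n m φf q (3*(n+j)+2+r) = 3*(m + q (j+1)) + (r - 1) := by
  have hw : 3*(n+j)+2+r - (3*n+2) = 3*j+r := by omega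
  rw [auxF, if_neg (by omega), if_neg (by omega), if_neg (by omega), hw,
    if_neg (by omega)]
  have h1 : (3*j+r)/3 = j := by omega
  have h2 : (3*j+r) % 3 = r := by omega
  rw [h1, h2]

section
variable {n m : ℕ} {φf q : ℕ → ℕ}
variable (hφm : ∀ i j, i < j → j < n → φf i < φf j) (hφb : ∀ i, i < n → φf i < m)
variable (hqm : ∀ i j, i < j → j < n → q i < q j) (hqb : ∀ j, j < n → q j < m)

include hφm hφb hqm hqb in
lemma auxF_step {k : ℕ} (hk : k + 1 < 6*n) :
    auxF n m φf q k ≤ auxF n m φf q (k+1) := by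
  have hn : 0 < n := by omega
  have hm : 0 < m := by
    have := hφb 0 hn; omega
  rcases lt_trichotomy (k+1) (3*n) with h | h | h
  · obtain ⟨i, r, hr, rfl⟩ : ∃ i r, r < 3 ∧ k = 3*i+r := ⟨k/3, k%3, by omega, by omega⟩
    have hi : i < n := by omega
    rcases (by omega : r = 0 ∨ r = 1 ∨ r = 2) with rfl | rfl | rfl
    · rw [show 3*i+0+1 = 3*i+1 by ring, auxF_left hi (by omega), auxF_left hi (by omega)]
      omega
    · rw [show 3*i+1+1 = 3*i+2 by ring, auxF_left hi (by omega), auxF_left hi (by omega)]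
      omega
    · have hi1 : i + 1 < n := by omega
      rw [show 3*i+2+1 = 3*(i+1)+0 by ring, auxF_left hi (by omega), auxF_left hi1 (by omega)]
      have := hφm i (i+1) (by omega) hi1
      omega
  · have hk' : k = 3*(n-1)+2 := by omega
    rw [hk', show 3*(n-1)+2+1 = 3*n by omega, auxF_left (by omega) (by omega), auxF_mid0]
    have := hφb (n-1) (by omega)
    omega
  · rcases (by omega : k = 3*n ∨ k = 3*n+1 ∨ 3*n+2 ≤ k) with rfl | rfl | h2
    · rw [auxF_mid0, auxF_mid1]; omega
    · rw [show 3*n+1+1 = 3*(n+0)+2 by ring, auxF_mid1, auxF_rorig]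
      omega
    · obtain ⟨j, r, hr, rfl⟩ : ∃ j r, r < 3 ∧ k = 3*(n+j)+2+r :=
        ⟨(k-(3*n+2))/3, (k-(3*n+2))%3, by omega, by omega⟩
      have hj1 : j + 1 < n := by omega
      rcases (by omega : r = 0 ∨ r = 1 ∨ r = 2) with rfl | rfl | rfl
      · rw [show 3*(n+j)+2+0 = 3*(n+j)+2 by ring,
          show 3*(n+j)+2+0+1 = 3*(n+j)+2+1 by ring, auxF_rorig,
          auxF_raux (by omega) (by omega)]
        have := hqm j (j+1) (by omega) hj1
        omega
      · rw [show 3*(n+j)+2+1+1 = 3*(n+j)+2+2 by ring,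
          auxF_raux (by omega) (by omega), auxF_raux (by omega) (by omega)]
        omega
      · rw [show 3*(n+j)+2+2+1 = 3*(n+(j+1))+2 by ring,
          auxF_raux (by omega) (by omega), auxF_rorig]
        omega

include hφb hqb in
lemma auxF_bound {v : ℕ} (hv : v < 6*n) (hnm : n ≤ m) :
    auxF n m φf q v < 6*m := by
  have hn : 0 < n := by omega
  have hm : 0 < m := by omega
  rcases lt_trichotomy v (3*n) with h | h | h
  · obtain ⟨i, r, hr, rfl⟩ : ∃ i r, r < 3 ∧ v = 3*i+r := ⟨v/3, v%3, by omega, by omega⟩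
    have hi : i < n := by omega
    rw [auxF_left hi hr]
    have := hφb i hi
    omega
  · subst h; rw [auxF_mid0]; omega
  · rcases (by omega : v = 3*n+1 ∨ 3*n+2 ≤ v) with rfl | h2
    · rw [auxF_mid1]; omega
    · obtain ⟨j, r, hr, rfl⟩ : ∃ j r, r < 3 ∧ v = 3*(n+j)+2+r :=
        ⟨(v-(3*n+2))/3, (v-(3*n+2))%3, by omega, by omega⟩
      have hj : j < n := by omega
      rcases (by omega : r = 0 ∨ 1 ≤ r ∧ r ≤ 2) with rfl | hr2
      · rw [show 3*(n+j)+2+0 = 3*(n+j)+2 by ring, auxF_rorig]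
        have := hqb j hj
        omega
      · rw [auxF_raux hr2.1 hr2.2]
        have hj1 : j + 1 < n := by omega
        have := hqb (j+1) hj1
        omega
end

/-- The augmented ordered matching `M'(σ)`: the ordered matching `M(σ)` (its
edges, the permutation edges, now join positions `augPos s i` and
`augPos s (s + σ i)`), together with the auxiliary edges: an edge between the
two vertices inserted in each of the `2s - 1` gaps, and one more edge between
the two extra vertices `3s, 3s+1` inserted in the middle gap.  It is an ordered
matching with `3s` edges on `6s` vertices. -/
def augMatching (s : ℕ) (σ : Equiv.Perm (Fin s)) : SimpleGraph (Fin (6 * s)) :=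
  SimpleGraph.fromRel (fun a b =>
    (∃ i : Fin s, (a : ℕ) = augPos s i ∧ (b : ℕ) = augPos s (s + (σ i : ℕ))) ∨
    (∃ i : ℕ, i < 2 * s - 1 ∧ (a : ℕ) = augPos s i + 1 ∧ (b : ℕ) = augPos s i + 2) ∨
    ((a : ℕ) = 3 * s ∧ (b : ℕ) = 3 * s + 1))

lemma edge_classify {m : ℕ} (P : Equiv.Perm (Fin m)) {a b : Fin (6*m)}
    (hab : (augMatching m P).Adj a b) (h : (a:ℕ) < (b:ℕ)) :
    ((b:ℕ) = (a:ℕ) + 1) ∨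
    ∃ J : Fin m, (a:ℕ) = 3*(J:ℕ) ∧ (b:ℕ) = 3*(m + (P J : ℕ)) + 2 := by
  rw [augMatching, SimpleGraph.fromRel_adj] at hab
  obtain ⟨hne, h1 | h1⟩ := hab <;>
    rcases h1 with ⟨i, hi1, hi2⟩ | ⟨i, hi, hi1, hi2⟩ | ⟨hi1, hi2⟩
  · right
    refine ⟨i, ?_, ?_⟩
    · rw [hi1, augPos_of_lt i.isLt]
    · rw [hi2, augPos_of_ge (by omega)]
  · left; omega
  · left; omega
  · exfalso
    rw [augPos_of_lt i.isLt] at hi1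
    rw [augPos_of_ge (by omega)] at hi2
    have := i.isLt
    have hPi := (P i).isLt
    omega
  · left; omega
  · left; omega

lemma augPos_le {s i : ℕ} : augPos s i ≤ 3*i+2 := by unfold augPos; split <;> omega
lemma augPos_ge {s i : ℕ} : 3*i ≤ augPos s i := by unfold augPos; split <;> omega

/-- There is an ordered homomorphism `M'(p) → M'(P)` iff `P` contains `p` as a
pattern. -/
theorem stmt1 (n m : ℕ) (hnm : n ≤ m) (p : Equiv.Perm (Fin n)) (P : Equiv.Perm (Fin m)) :
    (∃ f : Fin (6 * n) → Fin (6 * m), Monotone f ∧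
      ∀ u v : Fin (6 * n), (augMatching n p).Adj u v → (augMatching m P).Adj (f u) (f v)) ↔
    ContainsPattern P p := by
  rcases Nat.eq_zero_or_pos n with rfl | hn
  · constructor
    · intro _
      exact ⟨OrderEmbedding.ofStrictMono (fun i => i.elim0) (fun i => i.elim0),
        fun j => j.elim0⟩
    · intro _
      refine ⟨fun v => absurd v.isLt (by omega), ?_, ?_⟩
      · intro a b _
        exact absurd a.isLt (by omega)
      · intro u v _
        exact absurd u.isLt (by omega)
  have hm : 0 < m := lt_of_lt_of_le hn hnm
  constructor
  · rintro ⟨f, hmono, hedge⟩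
    set Fv : ℕ → ℕ := fun v => if h : v < 6*n then (f ⟨v, h⟩ : ℕ) else 0 with hFv
    have hMon : ∀ x y : ℕ, x ≤ y → y < 6*n → Fv x ≤ Fv y := by
      intro x y hxy hy
      simp only [hFv, dif_pos (lt_of_le_of_lt hxy hy), dif_pos hy]
      exact hmono (show (⟨x, lt_of_le_of_lt hxy hy⟩ : Fin (6*n)) ≤ ⟨y, hy⟩ from hxy)
    have hED : ∀ (x y : ℕ) (hx : x < 6*n) (hy : y < 6*n), x < y →
        (augMatching n p).Adj ⟨x, hx⟩ ⟨y, hy⟩ →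
        Fv x + 1 ≤ Fv y ∧
          (Fv y = Fv x + 1 ∨
            ∃ J : Fin m, Fv x = 3*(J:ℕ) ∧ Fv y = 3*(m + (P J : ℕ)) + 2) := by
      intro x y hx hy hxy hadj
      have h2 := hedge _ _ hadj
      have hle : (f ⟨x,hx⟩ : ℕ) ≤ (f ⟨y,hy⟩ : ℕ) :=
        hmono (show (⟨x,hx⟩ : Fin (6*n)) ≤ ⟨y,hy⟩ from le_of_lt hxy)
      have hne : (f ⟨x,hx⟩ : ℕ) ≠ (f ⟨y,hy⟩ : ℕ) := fun hc => h2.ne (Fin.ext hc)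
      have hlt : (f ⟨x,hx⟩ : ℕ) < (f ⟨y,hy⟩ : ℕ) := lt_of_le_of_ne hle hne
      have hcl := edge_classify P h2 hlt
      simp only [hFv, dif_pos hx, dif_pos hy]
      exact ⟨hlt, hcl⟩
    have hadjP : ∀ i : Fin n, (augMatching n p).Adj
        ⟨3*(i:ℕ), by have := i.isLt; omega⟩
        ⟨3*(n+(p i : ℕ))+2, by have := (p i).isLt; omega⟩ := by
      intro i
      rw [augMatching, SimpleGraph.fromRel_adj]
      refine ⟨?_, Or.inl (Or.inl ⟨i, ?_, ?_⟩)⟩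
      · intro hcon
        have := congrArg Fin.val hcon
        simp only [Fin.val_mk] at this
        omega
      · simp only [Fin.val_mk]; rw [augPos_of_lt i.isLt]
      · simp only [Fin.val_mk]; rw [augPos_of_ge (by omega)]
    have hadjA : ∀ (i : ℕ) (hi : i < 2*n-1), (augMatching n p).Adj
        ⟨augPos n i + 1, by have := @augPos_le n i; omega⟩
        ⟨augPos n i + 2, by have := @augPos_le n i; omega⟩ := by
      intro i hi
      rw [augMatching, SimpleGraph.fromRel_adj]
      refine ⟨?_, Or.inl (Or.inr (Or.inl ⟨i, hi, ?_, ?_⟩))⟩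
      · intro hcon
        have := congrArg Fin.val hcon
        simp only [Fin.val_mk] at this
        omega
      · simp only [Fin.val_mk]
      · simp only [Fin.val_mk]
    have hadjM : (augMatching n p).Adj ⟨3*n, by omega⟩ ⟨3*n+1, by omega⟩ := by
      rw [augMatching, SimpleGraph.fromRel_adj]
      refine ⟨?_, Or.inl (Or.inr (Or.inr ⟨?_, ?_⟩))⟩
      · intro hcon
        have := congrArg Fin.val hcon
        simp only [Fin.val_mk] at this
        omega
      · simp only [Fin.val_mk]
      · simp only [Fin.val_mk]
    have hauxF : ∀ i : ℕ, i < 2*n-1 → Fv (augPos n i + 1) + 1 ≤ Fv (augPos n i + 2) :=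
      fun i hi => (hED _ _ _ _ (by omega) (hadjA i hi)).1
    have hmidF : Fv (3*n) + 1 ≤ Fv (3*n+1) := (hED _ _ _ _ (by omega) hadjM).1
    have key : ∀ i : Fin n, ∃ J : Fin m,
        Fv (3*(i:ℕ)) = 3*(J:ℕ) ∧ Fv (3*(n+(p i : ℕ))+2) = 3*(m + (P J : ℕ)) + 2 := by
      intro i
      have hi := i.isLt
      have hpi := (p i).isLt
      obtain ⟨h1, h2⟩ := hED _ _ (by omega) (by omega) (by omega) (hadjP i)
      have e1 := hauxF (n-1) (by omega)
      rw [augPos_of_lt (show n-1 < n by omega)] at e1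
      have e2 := hmidF
      have e3 : Fv (3*(n-1)+2) ≤ Fv (3*n) := hMon _ _ (by omega) (by omega)
      have e4 : Fv (3*(i:ℕ)) ≤ Fv (3*(n-1)+1) := hMon _ _ (by omega) (by omega)
      have e5 : Fv (3*n+1) ≤ Fv (3*(n+(p i:ℕ))+2) := hMon _ _ (by omega) (by omega)
      rcases h2 with h2 | ⟨J, hJ1, hJ2⟩
      · omega
      · exact ⟨J, hJ1, hJ2⟩
    choose J hJ1 hJ2 using key
    have hJstep : ∀ (t : ℕ) (h1 : t < n) (h2 : t+1 < n),
        (J ⟨t,h1⟩ : ℕ) < (J ⟨t+1,h2⟩ : ℕ) := by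
      intro t h1 h2
      have e1 := hauxF t (by omega)
      rw [augPos_of_lt h1] at e1
      have e4 : Fv (3*t) ≤ Fv (3*t+1) := hMon _ _ (by omega) (by omega)
      have e5 : Fv (3*t+2) ≤ Fv (3*(t+1)) := hMon _ _ (by omega) (by omega)
      have g1 := hJ1 ⟨t,h1⟩
      have g2 := hJ1 ⟨t+1,h2⟩
      simp only [Fin.val_mk] at g1 g2
      omega
    have hJS : StrictMono J := by
      intro a b hab
      set JJ : ℕ → ℕ := fun t => if h : t < n then (J ⟨t,h⟩ : ℕ) else m + t with hJJ
      have hSS : StrictMono JJ := by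
        apply strictMono_nat_of_lt_succ
        intro t
        simp only [hJJ]
        rcases lt_trichotomy (t+1) n with h | h | h
        · rw [dif_pos (by omega), dif_pos h]
          exact hJstep t (by omega) h
        · rw [dif_pos (by omega), dif_neg (by omega)]
          have := (J ⟨t, by omega⟩).isLt
          omega
        · rw [dif_neg (by omega), dif_neg (by omega)]
          omega
      have h2 := hSS (show (a:ℕ) < (b:ℕ) from hab)
      simp only [hJJ, dif_pos a.isLt, dif_pos b.isLt, Fin.eta] at h2
      exact h2
    have hfR : ∀ r : Fin n, Fv (3*(n+(r:ℕ))+2) = 3*(m + (P (J (p.symm r)) : ℕ)) + 2 := by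
      intro r
      have := hJ2 (p.symm r)
      rwa [Equiv.apply_symm_apply] at this
    have hgstep : ∀ (t : ℕ) (h1 : t < n) (h2 : t+1 < n),
        (P (J (p.symm ⟨t,h1⟩)) : ℕ) < (P (J (p.symm ⟨t+1,h2⟩)) : ℕ) := by
      intro t h1 h2
      have e1 := hauxF (n+t) (by omega)
      rw [augPos_of_ge (by omega)] at e1
      have e4 : Fv (3*(n+t)+2) ≤ Fv (3*(n+t)+2+1) := hMon _ _ (by omega) (by omega)
      have e5 : Fv (3*(n+t)+2+2) ≤ Fv (3*(n+(t+1))+2) := hMon _ _ (by omega) (by omega)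
      have g1 := hfR ⟨t,h1⟩
      have g2 := hfR ⟨t+1,h2⟩
      simp only [Fin.val_mk] at g1 g2
      omega
    have main : ∀ j k : Fin n, p j < p k → P (J j) < P (J k) := by
      intro j k hjk
      set GJ : ℕ → ℕ :=
        fun t => if h : t < n then (P (J (p.symm ⟨t,h⟩)) : ℕ) else m + t with hGJ
      have hGS : StrictMono GJ := by
        apply strictMono_nat_of_lt_succ
        intro t
        simp only [hGJ]
        rcases lt_trichotomy (t+1) n with h | h | h
        · rw [dif_pos (by omega), dif_pos h]
          exact hgstep t (by omega) h
        · rw [dif_pos (by omega), dif_neg (by omega)]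
          have := (P (J (p.symm ⟨t, by omega⟩))).isLt
          omega
        · rw [dif_neg (by omega), dif_neg (by omega)]
          omega
      have h2 := hGS (show ((p j):ℕ) < ((p k):ℕ) from hjk)
      simp only [hGJ, dif_pos (p j).isLt, dif_pos (p k).isLt, Fin.eta,
        Equiv.symm_apply_apply] at h2
      exact h2
    refine ⟨OrderEmbedding.ofStrictMono J hJS, ?_⟩
    intro j k
    show P (J j) < P (J k) ↔ p j < p k
    constructor
    · intro hPP
      rcases lt_trichotomy (p j) (p k) with h | h | h
      · exact h
      · exfalso
        have hjk : j = k := p.injective h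
        subst hjk
        exact lt_irrefl _ hPP
      · exact absurd hPP (lt_asymm (main k j h))
    · exact main j k
  · rintro ⟨φ, hφ⟩
    set φf : ℕ → ℕ := fun i => if h : i < n then (φ ⟨i, h⟩ : ℕ) else 0 with hφf
    set q : ℕ → ℕ := fun j => if h : j < n then (P (φ (p.symm ⟨j, h⟩)) : ℕ) else 0 with hq
    have hφval : ∀ i : Fin n, φf (i : ℕ) = (φ i : ℕ) := by
      intro i; rw [hφf]; simp [i.isLt]
    have hqval : ∀ j : Fin n, q (j : ℕ) = (P (φ (p.symm j)) : ℕ) := by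
      intro j; rw [hq]; simp [j.isLt]
    have hφm : ∀ i j, i < j → j < n → φf i < φf j := by
      intro i j hij hj
      have hi : i < n := lt_trans hij hj
      have := φ.strictMono (show (⟨i, hi⟩ : Fin n) < ⟨j, hj⟩ from hij)
      rw [hφf]; simp only [dif_pos hi, dif_pos hj]
      exact this
    have hφb : ∀ i, i < n → φf i < m := by
      intro i hi; rw [hφf]; simp only [dif_pos hi]; exact (φ ⟨i, hi⟩).isLt
    have hqm : ∀ i j, i < j → j < n → q i < q j := by
      intro i j hij hj
      have hi : i < n := lt_trans hij hj
      rw [hq]; simp only [dif_pos hi, dif_pos hj]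
      have : p (p.symm ⟨i, hi⟩) < p (p.symm ⟨j, hj⟩) := by
        rw [Equiv.apply_symm_apply, Equiv.apply_symm_apply]
        exact hij
      exact (hφ _ _).mpr this
    have hqb : ∀ j, j < n → q j < m := by
      intro j hj; rw [hq]; simp only [dif_pos hj]; exact (P _).isLt
    refine ⟨fun v => ⟨auxF n m φf q v.val, auxF_bound hφb hqb v.isLt hnm⟩, ?_, ?_⟩
    · -- monotone
      intro a b hab
      have hab' : (a : ℕ) ≤ (b : ℕ) := hab
      set GG : ℕ → ℕ := fun v => if v < 6*n then auxF n m φf q v else v + 6*m with hGG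
      have hGGmono : Monotone GG := by
        apply monotone_nat_of_le_succ
        intro k
        simp only [hGG]
        rcases lt_trichotomy (k+1) (6*n) with h | h | h
        · rw [if_pos (by omega), if_pos h]
          exact auxF_step hφm hφb hqm hqb h
        · rw [if_pos (by omega), if_neg (by omega)]
          have := auxF_bound hφb hqb (show k < 6*n by omega) hnm
          omega
        · rw [if_neg (by omega), if_neg (by omega)]
          omega
      have := hGGmono hab'
      simp only [hGG, if_pos a.isLt, if_pos b.isLt] at this
      exact this
    · -- edges
      intro u v huv
      have claim : ∀ a b : Fin (6*n),
          ((∃ i : Fin n, (a : ℕ) = augPos n i ∧ (b : ℕ) = augPos n (n + (p i : ℕ))) ∨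
           (∃ i : ℕ, i < 2 * n - 1 ∧ (a : ℕ) = augPos n i + 1 ∧ (b : ℕ) = augPos n i + 2) ∨
           ((a : ℕ) = 3 * n ∧ (b : ℕ) = 3 * n + 1)) →
          (augMatching m P).Adj
            ⟨auxF n m φf q a.val, auxF_bound hφb hqb a.isLt hnm⟩
            ⟨auxF n m φf q b.val, auxF_bound hφb hqb b.isLt hnm⟩ := by
        intro a b hrel
        rw [augMatching, SimpleGraph.fromRel_adj]
        rcases hrel with ⟨i, ha, hb⟩ | ⟨i, hi, ha, hb⟩ | ⟨ha, hb⟩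
        · -- permutation edge
          rw [augPos_of_lt i.isLt] at ha
          rw [augPos_of_ge (by omega)] at hb
          have hea : auxF n m φf q a.val = 3 * φf (i : ℕ) + 0 := by
            rw [ha, show 3*(i:ℕ) = 3*(i:ℕ)+0 by ring]
            exact auxF_left i.isLt (by omega)
          have heb : auxF n m φf q b.val = 3*(m + q ((p i : ℕ))) + 2 := by
            rw [hb]; exact auxF_rorig
          rw [hφval] at hea
          rw [hqval (p i), Equiv.symm_apply_apply] at heb
          constructor
          · have := (φ i).isLt
            intro hcon
            have := congrArg Fin.val hcon
            simp only [Fin.val_mk] at this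
            omega
          · refine Or.inl (Or.inl ⟨φ i, ?_, ?_⟩)
            · simp only [Fin.val_mk, hea, augPos_of_lt (φ i).isLt]; omega
            · simp only [Fin.val_mk, heb, augPos_of_ge (show m ≤ m + (P (φ i) : ℕ) by omega)]
        · -- auxiliary edge
          rcases lt_or_ge i n with hilt | hige
          · rw [augPos_of_lt hilt] at ha hb
            have hea : auxF n m φf q a.val = 3 * φf i + 1 := by
              rw [ha]; exact auxF_left hilt (by omega)
            have heb : auxF n m φf q b.val = 3 * φf i + 2 := by
              rw [hb]; exact auxF_left hilt (by omega)
            have hb1 := hφb i hilt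
            constructor
            · intro hcon
              have := congrArg Fin.val hcon
              simp only [Fin.val_mk] at this
              omega
            · refine Or.inl (Or.inr (Or.inl ⟨φf i, by omega, ?_, ?_⟩))
              · simp only [Fin.val_mk, hea, augPos_of_lt (show φf i < m from hb1)]
              · simp only [Fin.val_mk, heb, augPos_of_lt (show φf i < m from hb1)]
          · obtain ⟨j, rfl⟩ : ∃ j, i = n + j := ⟨i - n, by omega⟩
            have hj1 : j + 1 < n := by omega
            rw [augPos_of_ge (by omega)] at ha hb
            have hea : auxF n m φf q a.val = 3*(m + q (j+1)) + 0 := by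
              rw [ha, show 3*(n+j)+2+1 = 3*(n+j)+2+1 by ring]
              exact auxF_raux (by omega) (by omega)
            have heb : auxF n m φf q b.val = 3*(m + q (j+1)) + 1 := by
              rw [hb, show 3*(n+j)+2+2 = 3*(n+j)+2+2 by ring]
              exact auxF_raux (by omega) (by omega)
            have hq1 : 1 ≤ q (j+1) := by
              have := hqm 0 (j+1) (by omega) hj1
              omega
            have hq2 : q (j+1) < m := hqb _ hj1
            constructor
            · intro hcon
              have := congrArg Fin.val hcon
              simp only [Fin.val_mk] at this
              omega
            · refine Or.inl (Or.inr (Or.inl ⟨m + q (j+1) - 1, by omega, ?_, ?_⟩))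
              · simp only [Fin.val_mk, hea, augPos_of_ge (show m ≤ m + q (j+1) - 1 by omega)]
                omega
              · simp only [Fin.val_mk, heb, augPos_of_ge (show m ≤ m + q (j+1) - 1 by omega)]
                omega
        · -- middle edge
          have hea : auxF n m φf q a.val = 3*m := by rw [ha]; exact auxF_mid0
          have heb : auxF n m φf q b.val = 3*m+1 := by rw [hb]; exact auxF_mid1
          constructor
          · intro hcon
            have := congrArg Fin.val hcon
            simp only [Fin.val_mk] at this
            omega
          · exact Or.inl (Or.inr (Or.inr ⟨by simp only [Fin.val_mk, hea],
              by simp only [Fin.val_mk, heb]⟩))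
      rw [augMatching, SimpleGraph.fromRel_adj] at huv
      obtain ⟨hne, hrel | hrel⟩ := huv
      · exact claim u v hrel
      · exact (claim v u hrel).symm
end

section
/- Let n ≤ m, let π be a permutation of [n], let Π be a permutation of [m], and let f be any ordered homomorphism from the augmented ordered matching M'(π) to the augmented ordered matching M'(Π). Then f maps the two endpoints of every permutation edge of M'(π) to the two endpoints of a permutation edge of M'(Π) (never to an auxiliary edge), and distinct permutation edges of M'(π) are mapped to distinct permutation edges of M'(Π). -/
theorem augPos_lt {s i : ℕ} (h : i < 2 * s) : augPos s i < 6 * s := by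
  unfold augPos; split <;> omega

/-- The `i`-th original vertex of `M(σ)` viewed as a vertex of `M'(σ)`. -/
def augVert (s i : ℕ) (h : i < 2 * s) : Fin (6 * s) := ⟨augPos s i, augPos_lt h⟩

lemma adj_of_rel {s : ℕ} {σ : Equiv.Perm (Fin s)} {a b : Fin (6 * s)}
    (hne : (a : ℕ) ≠ (b : ℕ))
    (h : (∃ i : Fin s, (a : ℕ) = augPos s i ∧ (b : ℕ) = augPos s (s + (σ i : ℕ))) ∨
    (∃ i : ℕ, i < 2 * s - 1 ∧ (a : ℕ) = augPos s i + 1 ∧ (b : ℕ) = augPos s i + 2) ∨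
    ((a : ℕ) = 3 * s ∧ (b : ℕ) = 3 * s + 1)) :
    (augMatching s σ).Adj a b := by
  rw [augMatching, SimpleGraph.fromRel_adj]
  exact ⟨fun e => hne (by rw [e]), Or.inl h⟩

lemma adjChar {s : ℕ} {σ : Equiv.Perm (Fin s)} {u v : Fin (6 * s)}
    (h : (augMatching s σ).Adj u v) (hlt : (u : ℕ) < (v : ℕ)) :
    (v : ℕ) = (u : ℕ) + 1 ∨
      ∃ i : Fin s, (u : ℕ) = 3 * i ∧ (v : ℕ) = 3 * (s + (σ i : ℕ)) + 2 := by
  rw [augMatching, SimpleGraph.fromRel_adj] at h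
  obtain ⟨hne, h | h⟩ := h
  · rcases h with ⟨i, h1, h2⟩ | ⟨i, hi, h1, h2⟩ | ⟨h1, h2⟩
    · right
      refine ⟨i, ?_, ?_⟩
      · rw [h1, augPos_of_lt i.isLt]
      · rw [h2, augPos_of_ge (by omega)]
    · left; omega
    · left; omega
  · rcases h with ⟨i, h1, h2⟩ | ⟨i, hi, h1, h2⟩ | ⟨h1, h2⟩
    · exfalso
      have hi := i.isLt
      have hσi := (σ i).isLt
      rw [augPos_of_lt i.isLt] at h1
      rw [augPos_of_ge (by omega : s ≤ s + ((σ i : ℕ)))] at h2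
      omega
    · exfalso; omega
    · exfalso; omega

/-- Any ordered homomorphism `f : M'(p) → M'(P)` sends the endpoints of every
permutation edge of `M'(p)` to the endpoints of a permutation edge of `M'(P)`
(never to an auxiliary edge), and distinct permutation edges of `M'(p)` go to
distinct permutation edges of `M'(P)`. -/
theorem stmt2 (n m : ℕ) (hnm : n ≤ m) (p : Equiv.Perm (Fin n)) (P : Equiv.Perm (Fin m))
    (f : Fin (6 * n) → Fin (6 * m)) (hmono : Monotone f)
    (hhom : ∀ u v : Fin (6 * n),
      (augMatching n p).Adj u v → (augMatching m P).Adj (f u) (f v)) :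
    ∃ g : Fin n → Fin m, Function.Injective g ∧
      ∀ i : Fin n,
        f (augVert n (i : ℕ) (by have := i.isLt; omega)) =
          augVert m ((g i : ℕ)) (by have := (g i).isLt; omega) ∧
        f (augVert n (n + (p i : ℕ)) (by have := (p i).isLt; omega)) =
          augVert m (m + (P (g i) : ℕ)) (by have := (P (g i)).isLt; omega) := by
  have key : ∀ i : Fin n, ∃ j : Fin m,
      (f (augVert n (i : ℕ) (by have := i.isLt; omega)) : ℕ) = 3 * (j : ℕ) ∧
      (f (augVert n (n + (p i : ℕ)) (by have := (p i).isLt; omega)) : ℕ)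
        = 3 * (m + (P j : ℕ)) + 2 := by
    intro i
    have hi := i.isLt
    have hpi := (p i).isLt
    have hn : 1 ≤ n := by omega
    set L : Fin (6 * n) := augVert n (i : ℕ) (by omega) with hL
    set R : Fin (6 * n) := augVert n (n + (p i : ℕ)) (by omega) with hR
    have hLval : (L : ℕ) = 3 * (i : ℕ) := augPos_of_lt hi
    have hRval : (R : ℕ) = 3 * (n + (p i : ℕ)) + 2 := augPos_of_ge (by omega)
    have hA : (augMatching n p).Adj L R := by
      refine adj_of_rel (by omega) (Or.inl ⟨i, rfl, rfl⟩)
    have hB := hhom L R hA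
    have hle : (f L : ℕ) ≤ (f R : ℕ) := hmono (by rw [Fin.le_def]; omega)
    have hne : (f L : ℕ) ≠ (f R : ℕ) := fun h => hB.ne (Fin.ext h)
    rcases adjChar hB (by omega) with hcase | ⟨j, hj1, hj2⟩
    · exfalso
      set A1 : Fin (6 * n) := ⟨3 * n - 2, by omega⟩
      set A2 : Fin (6 * n) := ⟨3 * n - 1, by omega⟩
      set A3 : Fin (6 * n) := ⟨3 * n, by omega⟩
      set A4 : Fin (6 * n) := ⟨3 * n + 1, by omega⟩
      have hA1 : (augMatching n p).Adj A1 A2 := by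
        refine adj_of_rel (by simp [A1, A2] <;> omega)
          (Or.inr (Or.inl ⟨n - 1, by omega, ?_, ?_⟩)) <;>
          · show _ = augPos n (n - 1) + _
            rw [augPos_of_lt (by omega)]; simp [A1, A2] <;> omega
      have hA2 : (augMatching n p).Adj A3 A4 := by
        refine adj_of_rel (by simp [A3, A4]) (Or.inr (Or.inr ⟨rfl, rfl⟩))
      have m1 : (f L : ℕ) ≤ (f A1 : ℕ) := hmono (by rw [Fin.le_def]; simp [A1] <;> omega)
      have m2 : (f A1 : ℕ) ≤ (f A2 : ℕ) := hmono (by rw [Fin.le_def]; simp [A1, A2] <;> omega)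
      have m3 : (f A2 : ℕ) ≤ (f A3 : ℕ) := hmono (by rw [Fin.le_def]; simp [A2, A3] <;> omega)
      have m4 : (f A3 : ℕ) ≤ (f A4 : ℕ) := hmono (by rw [Fin.le_def]; simp [A3, A4] <;> omega)
      have m5 : (f A4 : ℕ) ≤ (f R : ℕ) := hmono (by rw [Fin.le_def]; simp [A4] <;> omega)
      have e1 : (f A1 : ℕ) ≠ (f A2 : ℕ) := fun h => (hhom _ _ hA1).ne (Fin.ext h)
      have e2 : (f A3 : ℕ) ≠ (f A4 : ℕ) := fun h => (hhom _ _ hA2).ne (Fin.ext h)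
      omega
    · exact ⟨j, hj1, hj2⟩
  choose g hg using key
  have hinj : ∀ i j : Fin n, (i : ℕ) < (j : ℕ) → g i ≠ g j := by
    intro i j hij hgij
    have hi := i.isLt
    have hj := j.isLt
    set B1 : Fin (6 * n) := ⟨3 * (i : ℕ) + 1, by omega⟩
    set B2 : Fin (6 * n) := ⟨3 * (i : ℕ) + 2, by omega⟩
    have hAB : (augMatching n p).Adj B1 B2 := by
      refine adj_of_rel (by simp [B1, B2]) (Or.inr (Or.inl ⟨(i : ℕ), by omega, ?_, ?_⟩)) <;>
        · show _ = augPos n (i : ℕ) + _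
          rw [augPos_of_lt hi]
    have hLi := (hg i).1
    have hLj := (hg j).1
    have hLival : ((augVert n (i : ℕ) (by omega) : Fin (6 * n)) : ℕ) = 3 * (i : ℕ) :=
      augPos_of_lt hi
    have hLjval : ((augVert n (j : ℕ) (by omega) : Fin (6 * n)) : ℕ) = 3 * (j : ℕ) :=
      augPos_of_lt hj
    have m1 : (f (augVert n (i : ℕ) (by have := i.isLt; omega)) : ℕ) ≤ (f B1 : ℕ) :=
      hmono (by rw [Fin.le_def]; simp [B1] <;> omega)
    have m2 : (f B1 : ℕ) ≤ (f B2 : ℕ) := hmono (by rw [Fin.le_def]; simp [B1, B2] <;> omega)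
    have m3 : (f B2 : ℕ) ≤ (f (augVert n (j : ℕ) (by have := j.isLt; omega)) : ℕ) :=
      hmono (by rw [Fin.le_def]; simp [B2] <;> omega)
    have e1 : (f B1 : ℕ) ≠ (f B2 : ℕ) := fun h => (hhom _ _ hAB).ne (Fin.ext h)
    rw [hgij] at hLi
    omega
  refine ⟨g, ?_, fun i => ⟨Fin.ext ?_, Fin.ext ?_⟩⟩
  · intro i j hgij
    by_contra hij
    rcases Nat.lt_or_ge (i : ℕ) (j : ℕ) with h | h
    · exact hinj i j h hgij
    · have : (j : ℕ) < (i : ℕ) := by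
        rcases Nat.lt_or_ge (j : ℕ) (i : ℕ) with h' | h'
        · exact h'
        · exact absurd (Fin.ext (Nat.le_antisymm h' h)) hij
      exact hinj j i this hgij.symm
  · rw [(hg i).1]
    exact (augPos_of_lt (g i).isLt).symm
  · rw [(hg i).2]
    exact (augPos_of_ge (by have := (P (g i)).isLt; omega)).symm
end

section
/- An ordered matching that is an ordered core admits no ordered homomorphism to any ordered matching with strictly fewer edges. -/
/-- An ordered matching: every vertex is incident to exactly one edge. -/
def IsOrderedMatching {V : Type*} (G : SimpleGraph V) : Prop :=
  ∀ v : V, ∃! w : V, G.Adj v w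

/-- An ordered core: an ordered graph admitting no ordered retraction to a
proper ordered subgraph (a subgraph different from the whole graph). -/
def IsOrderedCore {V : Type*} [LinearOrder V] (G : SimpleGraph V) : Prop :=
  ∀ H : G.Subgraph, H ≠ ⊤ →
    ¬ ∃ r : V → V, Monotone r ∧ (∀ x : V, r x ∈ H.verts) ∧
      (∀ u v : V, G.Adj u v → H.Adj (r u) (r v)) ∧ (∀ x ∈ H.verts, r x = x)

open Classical in
/-- The unique neighbor of a vertex in a matching. -/
noncomputable def omPartner {V : Type*} {G : SimpleGraph V} (h : IsOrderedMatching G) (v : V) :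
    V := (h v).choose

lemma omPartner_adj {V : Type*} {G : SimpleGraph V} (h : IsOrderedMatching G) (v : V) :
    G.Adj v (omPartner h v) := (h v).choose_spec.1

lemma omPartner_eq {V : Type*} {G : SimpleGraph V} (h : IsOrderedMatching G) {v w : V}
    (hadj : G.Adj v w) : w = omPartner h v := (h v).choose_spec.2 w hadj

lemma omPartner_invol {V : Type*} {G : SimpleGraph V} (h : IsOrderedMatching G) (v : V) :
    omPartner h (omPartner h v) = v :=
  (omPartner_eq h (omPartner_adj h v).symm).symm

/-- A matching on a finite vertex set has exactly half as many edges as vertices. -/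
lemma om_card {V : Type*} [Fintype V] {G : SimpleGraph V} (h : IsOrderedMatching G) :
    Fintype.card V = 2 * G.edgeSet.ncard := by
  classical
  set p := omPartner h with hp
  set φ : V → Sym2 V := fun v => s(v, p v) with hφ
  have hmemφ : ∀ v, φ v ∈ G.edgeSet := fun v => (omPartner_adj h v)
  have himg : G.edgeSet = ↑(Finset.univ.image φ) := by
    ext e
    induction e with
    | h a b =>
      simp only [SimpleGraph.mem_edgeSet, Finset.coe_image, Finset.coe_univ, Set.image_univ,
        Set.mem_range]
      constructor
      · intro hab
        exact ⟨a, by show s(a, p a) = s(a, b); rw [hp, ← omPartner_eq h hab]⟩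
      · rintro ⟨v, hv⟩
        have := hmemφ v
        rw [hv] at this
        exact this
  have hfib : ∀ v : V, Finset.univ.filter (fun u => φ u = φ v) = {v, p v} := by
    intro v
    ext u
    simp only [Finset.mem_filter, Finset.mem_univ, true_and, Finset.mem_insert,
      Finset.mem_singleton, hφ, Sym2.eq_iff]
    constructor
    · rintro (⟨h1, -⟩ | ⟨h1, -⟩) <;> [left; right] <;> exact h1
    · rintro (rfl | rfl)
      · left; exact ⟨rfl, rfl⟩
      · right; exact ⟨rfl, omPartner_invol h v⟩
  have hcard : (Finset.univ : Finset V).card =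
      ∑ e ∈ Finset.univ.image φ, (Finset.univ.filter (fun u => φ u = e)).card :=
    Finset.card_eq_sum_card_image φ Finset.univ
  have hsum : ∀ e ∈ Finset.univ.image φ, (Finset.univ.filter (fun u => φ u = e)).card = 2 := by
    intro e he
    obtain ⟨v, -, rfl⟩ := Finset.mem_image.mp he
    rw [hfib v]
    rw [Finset.card_insert_of_notMem (by simp; exact (omPartner_adj h v).ne), Finset.card_singleton]
  rw [Finset.card_univ] at hcard
  rw [hcard, Finset.sum_congr rfl hsum, Finset.sum_const, smul_eq_mul, mul_comm]
  congr 1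
  rw [himg, Set.ncard_coe_finset]

open Classical in
/-- Minimum of the fiber of `f` through `y`. -/
noncomputable def fibMin {V W : Type*} [LinearOrder V] [Fintype V] (f : V → W) (y : V) : V :=
  (Finset.univ.filter (fun z => f z = f y)).min' ⟨y, by simp⟩

open Classical in
lemma fibMin_map {V W : Type*} [LinearOrder V] [Fintype V] (f : V → W) (y : V) :
    f (fibMin f y) = f y := by
  have := Finset.min'_mem (Finset.univ.filter (fun z => f z = f y)) ⟨y, by simp⟩
  simpa [fibMin] using (Finset.mem_filter.mp this).2

open Classical in
lemma fibMin_le {V W : Type*} [LinearOrder V] [Fintype V] (f : V → W) {y z : V}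
    (h : f z = f y) : fibMin f y ≤ z :=
  Finset.min'_le _ _ (by simp [h])

lemma fibMin_congr {V W : Type*} [LinearOrder V] [Fintype V] (f : V → W) {x y : V}
    (h : f x = f y) : fibMin f x = fibMin f y :=
  le_antisymm (fibMin_le f ((fibMin_map f y).trans h.symm))
    (fibMin_le f ((fibMin_map f x).trans h))

/-- An ordered matching which is an ordered core admits no ordered
homomorphism to any ordered matching with strictly fewer edges. -/
theorem stmt11 {V W : Type*} [LinearOrder V] [Fintype V] [LinearOrder W] [Fintype W]
    (N : SimpleGraph V) (M : SimpleGraph W)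
    (hN : IsOrderedMatching N) (hNcore : IsOrderedCore N)
    (hM : IsOrderedMatching M)
    (hlt : M.edgeSet.ncard < N.edgeSet.ncard) :
    ¬ ∃ f : V → W, Monotone f ∧ ∀ u v : V, N.Adj u v → M.Adj (f u) (f v) := by
  rintro ⟨f, hmono, hhom⟩
  classical
  set p : V → V := omPartner hN with hpdef
  have hpadj : ∀ v, N.Adj v (p v) := omPartner_adj hN
  have hpp : ∀ v, p (p v) = v := omPartner_invol hN
  have hMadj : ∀ v, M.Adj (f v) (f (p v)) := fun v => hhom _ _ (hpadj v)
  have hMuniq : ∀ (w a b : W), M.Adj w a → M.Adj w b → a = b := by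
    intro w a b h1 h2
    obtain ⟨c, -, hc⟩ := hM w
    rw [hc a h1, hc b h2]
  have hfp : ∀ x y, f x = f y → f (p x) = f (p y) := by
    intro x y h
    exact hMuniq (f x) _ _ (hMadj x) (h ▸ hMadj y)
  have hfne : ∀ v, f v ≠ f (p v) := fun v => (hMadj v).ne
  set m : V → V := fibMin f with hmdef
  have hmf : ∀ y, f (m y) = f y := fibMin_map f
  have hmc : ∀ x y, f x = f y → m x = m y := fun x y h => fibMin_congr f h
  set r : V → V := fun y => if f y < f (p y) then m y else p (m (p y)) with hrdef
  -- r preserves the fiber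
  have hrf : ∀ y, f (r y) = f y := by
    intro y
    by_cases h : f y < f (p y)
    · simp only [hrdef, if_pos h]; exact hmf y
    · simp only [hrdef, if_neg h]
      have h2 : f (p (m (p y))) = f (p (p y)) := hfp _ _ (hmf (p y))
      rw [h2, hpp]
  -- r is constant on fibers
  have hrc : ∀ x y, f x = f y → r x = r y := by
    intro x y h
    have h2 : f (p x) = f (p y) := hfp _ _ h
    simp only [hrdef, h, h2]
    by_cases hc : f y < f (p y)
    · rw [if_pos hc, if_pos hc, hmc _ _ h]
    · rw [if_neg hc, if_neg hc, hmc _ _ h2]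
  have hrmono : Monotone r := by
    intro x y hxy
    rcases lt_or_eq_of_le (hmono hxy) with hlt' | heq
    · have hf : f (r x) < f (r y) := by rw [hrf, hrf]; exact hlt'
      by_contra hle
      exact absurd (hmono (le_of_not_ge hle)) (not_le.mpr hf)
    · exact le_of_eq (hrc x y heq)
  have hrhom : ∀ u v, N.Adj u v → N.Adj (r u) (r v) := by
    intro u v huv
    have hv : v = p u := omPartner_eq hN huv
    subst hv
    rcases (hfne u).lt_or_gt with h | h
    · have h' : ¬ f (p u) < f (p (p u)) := by rw [hpp]; exact not_lt.mpr h.le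
      simp only [hrdef, if_pos h, if_neg h', hpp]
      exact hpadj (m u)
    · have h1 : ¬ f u < f (p u) := not_lt.mpr h.le
      have h2 : f (p u) < f (p (p u)) := by rw [hpp]; exact h
      simp only [hrdef, if_neg h1, if_pos h2]
      exact (hpadj (m (p u))).symm
  have hrr : ∀ y, r (r y) = r y := fun y => hrc (r y) y (hrf y)
  -- f is not injective
  have hcard : Fintype.card W < Fintype.card V := by
    rw [om_card hN, om_card hM]; omega
  have hninj : ¬ Function.Injective f := fun hinj =>
    absurd (Fintype.card_le_of_injective f hinj) (not_le.mpr hcard)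
  obtain ⟨x, y, hxy, hne⟩ : ∃ x y, f x = f y ∧ x ≠ y := by
    simp only [Function.Injective, not_forall] at hninj
    obtain ⟨x, y, h1, h2⟩ := hninj
    exact ⟨x, y, h1, h2⟩
  -- find a "low" fiber with two elements
  obtain ⟨a, b, hab, hneab, hlow⟩ : ∃ a b, f a = f b ∧ a ≠ b ∧ f a < f (p a) := by
    rcases (hfne x).lt_or_gt with h | h
    · exact ⟨x, y, hxy, hne, h⟩
    · refine ⟨p x, p y, hfp _ _ hxy, ?_, ?_⟩
      · intro hpx
        exact hne (by rw [← hpp x, hpx, hpp])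
      · rw [hpp]; exact h
  -- an element not in the range of r
  set x0 : V := if m a = a then b else a with hx0
  have hx0f : f x0 = f a := by
    by_cases h : m a = a
    · simp only [hx0, if_pos h]; exact hab.symm
    · simp only [hx0, if_neg h]
  have hx0ne : m a ≠ x0 := by
    by_cases h : m a = a
    · simp only [hx0, if_pos h]; rw [h]; exact hneab
    · simp only [hx0, if_neg h]; exact h
  have hrx0 : r x0 = m a := by
    have hc : f x0 < f (p x0) := by rw [hx0f, hfp _ _ hx0f]; exact hlow
    simp only [hrdef, if_pos hc]
    exact hmc _ _ hx0f
  have hnotrange : ∀ z, r z ≠ x0 := by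
    intro z hz
    have h1 : f z = f x0 := by rw [← hrf z, hz]
    have := hrc z x0 h1
    rw [hz, hrx0] at this
    exact hx0ne this.symm
  -- the retract subgraph
  let H : N.Subgraph :=
    { verts := Set.range r
      Adj := fun u v => N.Adj u v ∧ u ∈ Set.range r ∧ v ∈ Set.range r
      adj_sub := fun h => h.1
      edge_vert := fun h => h.2.1
      symm := ⟨fun u v h => ⟨h.1.symm, h.2.2, h.2.1⟩⟩ }
  have hHne : H ≠ ⊤ := by
    intro h
    have hx : x0 ∈ H.verts := by rw [h]; trivial
    obtain ⟨z, hz⟩ := hx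
    exact hnotrange z hz
  exact hNcore H hHne ⟨r, hrmono, fun x => ⟨x, rfl⟩,
    fun u v huv => ⟨hrhom u v huv, ⟨u, rfl⟩, ⟨v, rfl⟩⟩,
    fun x hx => by obtain ⟨z, hz⟩ := hx; rw [← hz]; exact hrr z⟩
end

section
/- Let G be an ordered graph whose ordered core is an ordered matching N. Then for every ordered matching M, there exists an ordered homomorphism G → M if and only if there is a subset X of V(M) that is a union of edges of M such that the ordered subgraph of M induced by X is order-isomorphic to N. -/
/-- Homomorphic equivalence of ordered graphs: each admits an ordered
homomorphism to the other. -/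
def OrderedHomEquiv {V W : Type*} [Preorder V] [Preorder W]
    (G : SimpleGraph V) (H : SimpleGraph W) : Prop :=
  (∃ f : V → W, Monotone f ∧ ∀ u v : V, G.Adj u v → H.Adj (f u) (f v)) ∧
  (∃ g : W → V, Monotone g ∧ ∀ u v : W, H.Adj u v → G.Adj (g u) (g v))

theorem key_inj {U W : Type*} [LinearOrder U] [Fintype U] [LinearOrder W]
    (N : SimpleGraph U) (M : SimpleGraph W)
    (hN : IsOrderedMatching N) (hNcore : IsOrderedCore N)
    (hM : IsOrderedMatching M)
    (h : U → W) (hmono : Monotone h)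
    (hhom : ∀ u v : U, N.Adj u v → M.Adj (h u) (h v)) :
    Function.Injective h := by
  classical
  by_contra hinj
  -- matching involution on N
  set σ : U → U := fun v => (hN v).choose with hσdef
  have hσadj : ∀ v, N.Adj v (σ v) := fun v => (hN v).choose_spec.1
  have hσuniq : ∀ v w, N.Adj v w → w = σ v := fun v w hw => (hN v).choose_spec.2 w hw
  have hσσ : ∀ v, σ (σ v) = v := fun v => ((hN (σ v)).choose_spec.2 v (hσadj v).symm).symm
  have hMuniq : ∀ x y y' : W, M.Adj x y → M.Adj x y' → y = y' := by
    intro x y y' hy hy'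
    obtain ⟨w, -, hu⟩ := hM x
    rw [hu y hy, hu y' hy']
  have hB : ∀ z z' : U, h z = h z' → h (σ z) = h (σ z') := by
    intro z z' hzz
    have h1 := hhom z (σ z) (hσadj z)
    have h2 := hhom z' (σ z') (hσadj z')
    rw [← hzz] at h2
    exact hMuniq _ _ _ h1 h2
  have hneq : ∀ z, h z ≠ h (σ z) := fun z => (hhom z (σ z) (hσadj z)).ne
  -- min of fiber
  have hfib : ∀ x : U, (Finset.univ.filter (fun y => h y = h x)).Nonempty :=
    fun x => ⟨x, by simp⟩
  set m : U → U := fun x => (Finset.univ.filter (fun y => h y = h x)).min' (hfib x) with hmdef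
  have hm_fib : ∀ x, h (m x) = h x := by
    intro x
    have := Finset.min'_mem (Finset.univ.filter (fun y => h y = h x)) (hfib x)
    simpa using this
  have hm_le : ∀ x y, h y = h x → m x ≤ y := by
    intro x y hy
    exact Finset.min'_le _ _ (by simp [hy])
  have hm_congr : ∀ x x', h x = h x' → m x = m x' := by
    intro x x' hxx
    exact le_antisymm (hm_le x (m x') (by rw [hm_fib, hxx]))
      (hm_le x' (m x) (by rw [hm_fib, hxx]))
  set rep : U → U := fun x => if h x < h (σ x) then m x else σ (m (σ x)) with hrepdef
  have hrep_fib : ∀ x, h (rep x) = h x := by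
    intro x
    by_cases hc : h x < h (σ x)
    · simp only [hrepdef, if_pos hc]; exact hm_fib x
    · simp only [hrepdef, if_neg hc]
      have := hB (m (σ x)) (σ x) (hm_fib (σ x))
      rw [hσσ] at this
      exact this
  have hrep_congr : ∀ x x', h x = h x' → rep x = rep x' := by
    intro x x' hxx
    have hs := hB x x' hxx
    by_cases hc : h x < h (σ x)
    · have hc' : h x' < h (σ x') := by rw [← hxx, ← hs]; exact hc
      simp only [hrepdef, if_pos hc, if_pos hc']
      exact hm_congr x x' hxx
    · have hc' : ¬ h x' < h (σ x') := by rw [← hxx, ← hs]; exact hc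
      simp only [hrepdef, if_neg hc, if_neg hc']
      rw [hm_congr (σ x) (σ x') hs]
  have hrep_sigma : ∀ x, rep (σ x) = σ (rep x) := by
    intro x
    by_cases hc : h x < h (σ x)
    · have hc' : ¬ h (σ x) < h (σ (σ x)) := by rw [hσσ]; exact asymm hc
      simp only [hrepdef, if_neg hc', if_pos hc, hσσ]
    · have hlt : h (σ x) < h x := lt_of_le_of_ne (not_lt.mp hc) (Ne.symm (hneq x))
      have hc' : h (σ x) < h (σ (σ x)) := by rw [hσσ]; exact hlt
      simp only [hrepdef, if_pos hc', if_neg hc, hσσ]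
  have hrep_mono : Monotone rep := by
    intro x y hxy
    rcases eq_or_lt_of_le (hmono hxy) with heq | hlt
    · exact le_of_eq (hrep_congr x y heq)
    · by_contra hcon
      have : h (rep y) ≤ h (rep x) := hmono (le_of_not_ge hcon)
      rw [hrep_fib, hrep_fib] at this
      exact absurd this (not_le.mpr hlt)
  have hrep_fix : ∀ x, x ∈ Set.range rep → rep x = x := by
    rintro x ⟨y, rfl⟩
    exact hrep_congr (rep y) y (hrep_fib y)
  -- some vertex is missed
  simp only [Function.Injective, not_forall] at hinj
  obtain ⟨a, c, hac, hane⟩ := hinj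
  have hrac : rep a = rep c := hrep_congr a c hac
  have hmiss : ∃ u : U, u ∉ Set.range rep := by
    by_contra hall
    push_neg at hall
    have ha := hrep_fix a (hall a)
    have hc := hrep_fix c (hall c)
    exact hane (by rw [← ha, ← hc, hrac])
  obtain ⟨u, hu⟩ := hmiss
  -- build the proper subgraph and retraction
  refine hNcore
    { verts := Set.range rep
      Adj := fun x y => N.Adj x y ∧ x ∈ Set.range rep ∧ y ∈ Set.range rep
      adj_sub := fun hxy => hxy.1
      edge_vert := fun hxy => hxy.2.1
      symm := ⟨fun x y hxy => ⟨hxy.1.symm, hxy.2.2, hxy.2.1⟩⟩ } ?_ ?_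
  · intro heq
    have : u ∈ Set.range rep := by
      rw [show Set.range rep = (⊤ : N.Subgraph).verts from congrArg SimpleGraph.Subgraph.verts heq]
      trivial
    exact hu this
  · refine ⟨rep, hrep_mono, fun x => ⟨x, rfl⟩, ?_, fun x hx => hrep_fix x hx⟩
    intro p q hpq
    have hq : q = σ p := hσuniq p q hpq
    subst hq
    rw [hrep_sigma]
    exact ⟨hσadj (rep p), ⟨p, rfl⟩, ⟨σ p, hrep_sigma p⟩⟩

/-- Let `G` be an ordered graph whose ordered core is an ordered matching `N`.
Then for every ordered matching `M`, there is an ordered homomorphism `G → M`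
iff some subset `X` of `V(M)` which is a union of edges of `M` induces an
ordered subgraph of `M` order-isomorphic to `N`. -/
theorem stmt12 {V U W : Type*} [LinearOrder V] [Fintype V] [LinearOrder U] [Fintype U]
    [LinearOrder W] [Fintype W]
    (G : SimpleGraph V) (N : SimpleGraph U)
    (hN : IsOrderedMatching N) (hNcore : IsOrderedCore N)
    (hequiv : OrderedHomEquiv G N)
    (M : SimpleGraph W) (hM : IsOrderedMatching M) :
    (∃ f : V → W, Monotone f ∧ ∀ u v : V, G.Adj u v → M.Adj (f u) (f v)) ↔
    ∃ X : Set W, (∀ x ∈ X, ∀ y : W, M.Adj x y → y ∈ X) ∧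
      ∃ e : U ≃o X, ∀ a b : U, N.Adj a b ↔ (M.induce X).Adj (e a) (e b) := by
  classical
  constructor
  · rintro ⟨p, pmono, phom⟩
    obtain ⟨g, gmono, ghom⟩ := hequiv.2
    set h : U → W := p ∘ g with hhdef
    have hmono : Monotone h := pmono.comp gmono
    have hhom : ∀ u v : U, N.Adj u v → M.Adj (h u) (h v) :=
      fun u v huv => phom _ _ (ghom u v huv)
    have hinj : Function.Injective h := key_inj N M hN hNcore hM h hmono hhom
    have hsm : StrictMono h := hmono.strictMono_of_injective hinj
    -- matching data
    have hσadj : ∀ v, N.Adj v ((hN v).choose) := fun v => (hN v).choose_spec.1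
    set σ : U → U := fun v => (hN v).choose with hσdef
    have hσuniq : ∀ v w, N.Adj v w → w = σ v := fun v w hw => (hN v).choose_spec.2 w hw
    have hMuniq : ∀ x y y' : W, M.Adj x y → M.Adj x y' → y = y' := by
      intro x y y' hy hy'
      obtain ⟨w, -, hu⟩ := hM x
      rw [hu y hy, hu y' hy']
    refine ⟨Set.range h, ?_, ?_⟩
    · rintro x ⟨a, rfl⟩ y hxy
      have : y = h (σ a) := hMuniq (h a) y (h (σ a)) hxy (hhom a (σ a) (hσadj a))
      exact ⟨σ a, this.symm⟩
    · refine ⟨hsm.orderIso, ?_⟩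
      intro a b
      constructor
      · intro hab
        exact hhom a b hab
      · intro hab
        have hab' : M.Adj (h a) (h b) := hab
        have : h b = h (σ a) := hMuniq (h a) (h b) (h (σ a)) hab' (hhom a (σ a) (hσadj a))
        have hb : b = σ a := hinj this
        rw [hb]
        exact hσadj a
  · rintro ⟨X, -, e, he⟩
    obtain ⟨f0, f0mono, f0hom⟩ := hequiv.1
    refine ⟨fun v => (e (f0 v) : W), ?_, ?_⟩
    · intro x y hxy
      exact Subtype.coe_le_coe.mpr (e.monotone (f0mono hxy))
    · intro u v huv
      have := (he (f0 u) (f0 v)).mp (f0hom u v huv)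
      exact this
end

section
/- Let H_0 be a connected ordered graph with vertices u_1 < ⋯ < u_h that is an ordered core, and let G be an ordered graph that is a vertex-disjoint union of t copies of H_0, where for c ∈ [t] and k ∈ [h] the vertex v^c_k of the c-th copy corresponds to u_k. For k ∈ [h] set A_k = {v^1_k, …, v^t_k}. Then there exists an ordered homomorphism from G to H_0 if and only if, for every k ∈ [h], the set A_k is an interval in the linear ordering of V(G). -/
/-- Iterates of a graph homomorphism are graph homomorphisms. -/
lemma iterate_hom {h : ℕ} {H₀ : SimpleGraph (Fin h)} {g : Fin h → Fin h}
    (hhom : ∀ a b, H₀.Adj a b → H₀.Adj (g a) (g b)) :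
    ∀ (n : ℕ) (a b : Fin h), H₀.Adj a b → H₀.Adj (g^[n] a) (g^[n] b) := by
  intro n
  induction n with
  | zero => simpa using fun a b hab => hab
  | succ n ih =>
    intro a b hab
    rw [Function.iterate_succ_apply', Function.iterate_succ_apply']
    exact hhom _ _ (ih a b hab)

/-- Every monotone endomorphism of an ordered core is the identity. -/
lemma core_endo_id {h : ℕ} {H₀ : SimpleGraph (Fin h)} (hcore : IsOrderedCore H₀)
    {g : Fin h → Fin h} (hmono : Monotone g)
    (hhom : ∀ a b, H₀.Adj a b → H₀.Adj (g a) (g b)) : ∀ x, g x = x := by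
  -- find `a < b` with `g^[a] = g^[b]` by pigeonhole
  obtain ⟨a, b, hab, heq⟩ : ∃ a b : ℕ, a < b ∧ g^[a] = g^[b] := by
    obtain ⟨a, b, hne, heq⟩ := Finite.exists_ne_map_eq_of_infinite (fun n : ℕ => g^[n])
    rcases hne.lt_or_gt with h' | h'
    · exact ⟨a, b, h', heq⟩
    · exact ⟨b, a, h', heq.symm⟩
  set p := b - a with hp
  have hp1 : 0 < p := by omega
  have step : ∀ m, a ≤ m → g^[m + p] = g^[m] := by
    intro m hm
    funext x
    have h1 : m + p = (m - a) + (a + p) := by omega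
    have h2 : m = (m - a) + a := by omega
    have h3 : a + p = b := by omega
    rw [h1, Function.iterate_add_apply, h3, ← heq, ← Function.iterate_add_apply, ← h2]
  have steps : ∀ (k m : ℕ), a ≤ m → g^[m + k * p] = g^[m] := by
    intro k
    induction k with
    | zero => simp
    | succ k ih =>
      intro m hm
      have hmm : m + (k + 1) * p = (m + k * p) + p := by ring
      rw [hmm, step _ (by omega), ih m hm]
  set n := p * (a + 1) with hn
  have hn1 : 1 ≤ n := by
    have : 1 * 1 ≤ p * (a + 1) := Nat.mul_le_mul hp1 (by omega)
    omega
  have hna : a ≤ n := by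
    have : 1 * (a + 1) ≤ p * (a + 1) := Nat.mul_le_mul hp1 (le_refl _)
    omega
  have hiter : g^[n + n] = g^[n] := by
    have hnn : n + n = n + (a + 1) * p := by rw [hn]; ring
    rw [hnn, steps (a + 1) n hna]
  have hidem : ∀ x, g^[n] (g^[n] x) = g^[n] x := by
    intro x
    calc g^[n] (g^[n] x) = g^[n + n] x := (Function.iterate_add_apply g n n x).symm
    _ = g^[n] x := by rw [hiter]
  -- the image of `g^[n]` is a subgraph admitting a retraction
  let H : H₀.Subgraph :=
    { verts := Set.range g^[n]
      Adj := fun x y => ∃ c d, H₀.Adj c d ∧ g^[n] c = x ∧ g^[n] d = y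
      adj_sub := by rintro x y ⟨c, d, hcd, rfl, rfl⟩; exact iterate_hom hhom n c d hcd
      edge_vert := by rintro x y ⟨c, d, hcd, rfl, rfl⟩; exact ⟨c, rfl⟩
      symm := ⟨by rintro x y ⟨c, d, hcd, rfl, rfl⟩; exact ⟨d, c, hcd.symm, rfl, rfl⟩⟩ }
  have hHtop : H = ⊤ := by
    by_contra hne
    exact hcore H hne ⟨g^[n], hmono.iterate n, fun x => ⟨x, rfl⟩,
      fun u w huw => ⟨u, w, huw, rfl, rfl⟩,
      by rintro x ⟨y, rfl⟩; exact hidem y⟩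
  have hsurjr : Function.Surjective g^[n] := by
    intro x
    have hx : x ∈ H.verts := by rw [hHtop]; exact Set.mem_univ x
    exact hx
  have hrid : ∀ x, g^[n] x = x := by
    intro x
    obtain ⟨y, rfl⟩ := hsurjr x
    exact hidem y
  -- `g` is injective, hence strictly monotone
  have hginj : Function.Injective g := by
    intro x y hxy
    obtain ⟨m, hm⟩ : ∃ m, n = m + 1 := ⟨n - 1, by omega⟩
    have : g^[n] x = g^[n] y := by
      rw [hm, Function.iterate_succ_apply, Function.iterate_succ_apply, hxy]
    rwa [hrid, hrid] at this
  have hsm : StrictMono g := hmono.strictMono_of_injective hginj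
  intro x
  rcases lt_trichotomy (g x) x with hlt | heq' | hgt
  · exfalso
    have key : ∀ m, g^[m + 1] x < x := by
      intro m
      induction m with
      | zero => simpa using hlt
      | succ m ih =>
        calc g^[m + 1 + 1] x = g (g^[m + 1] x) := Function.iterate_succ_apply' g _ x
        _ ≤ g x := hmono ih.le
        _ < x := hlt
    have hk := key (n - 1)
    rw [show n - 1 + 1 = n by omega, hrid x] at hk
    exact lt_irrefl x hk
  · exact heq'
  · exfalso
    have key : ∀ m, x < g^[m + 1] x := by
      intro m
      induction m with
      | zero => simpa using hgt
      | succ m ih =>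
        calc x < g x := hgt
        _ ≤ g (g^[m + 1] x) := hmono ih.le
        _ = g^[m + 1 + 1] x := (Function.iterate_succ_apply' g _ x).symm
    have hk := key (n - 1)
    rw [show n - 1 + 1 = n by omega, hrid x] at hk
    exact lt_irrefl x hk

/-- Let `H₀` be a connected ordered core on vertices `u_1 < ⋯ < u_h` (modelled
on `Fin h`), and let `G` be an ordered graph that is a vertex-disjoint union of
`t` copies of `H₀`, the vertex `v c k` of the `c`-th copy corresponding to
`u_k` (so `v` is a bijection onto `V(G)`, adjacency holds exactly inside copies
according to `H₀`, and each copy carries the vertex order of `H₀`).  Setting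
`A k = {v c k | c ∈ [t]}`, there is an ordered homomorphism `G → H₀` iff every
`A k` is an interval in the linear order on `V(G)`. -/
theorem stmt13 {V : Type*} [LinearOrder V] (h t : ℕ) (H₀ : SimpleGraph (Fin h))
    (hconn : H₀.Connected) (hcore : IsOrderedCore H₀)
    (G : SimpleGraph V) (v : Fin t → Fin h → V)
    (hinj : Function.Injective (fun q : Fin t × Fin h => v q.1 q.2))
    (hsurj : ∀ x : V, ∃ c k, x = v c k)
    (hadj : ∀ c c' k k', G.Adj (v c k) (v c' k') ↔ c = c' ∧ H₀.Adj k k')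
    (horder : ∀ (c : Fin t) (k k' : Fin h), v c k < v c k' ↔ k < k') :
    (∃ f : V → Fin h, Monotone f ∧ ∀ x y : V, G.Adj x y → H₀.Adj (f x) (f y)) ↔
    (∀ k : Fin h, ∀ (c c' : Fin t) (x : V),
      v c k ≤ x → x ≤ v c' k → ∃ c'' : Fin t, x = v c'' k) := by
  constructor
  · rintro ⟨f, hf, hhom⟩ k c c' x hle1 hle2
    -- the restriction of `f` to each copy is an endomorphism of the core, so identity
    have key : ∀ (c : Fin t) (k : Fin h), f (v c k) = k := by
      intro c
      have hvmono : Monotone (v c) := by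
        intro a b hab
        rcases eq_or_lt_of_le hab with rfl | hlt
        · exact le_refl _
        · exact ((horder c a b).2 hlt).le
      exact core_endo_id hcore (hf.comp hvmono)
        (fun a b hab => hhom _ _ ((hadj c c a b).2 ⟨rfl, hab⟩))
    obtain ⟨d, j, rfl⟩ := hsurj x
    have h1 : k ≤ j := by
      have := hf hle1
      rwa [key, key] at this
    have h2 : j ≤ k := by
      have := hf hle2
      rwa [key, key] at this
    exact ⟨d, by rw [le_antisymm h2 h1]⟩
  · intro hint
    set f : V → Fin h := fun x => (hsurj x).choose_spec.choose with hfdef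
    have hfx : ∀ x : V, x = v (hsurj x).choose (f x) :=
      fun x => (hsurj x).choose_spec.choose_spec
    refine ⟨f, ?_, ?_⟩
    · intro x y hxy
      by_contra hcon
      push_neg at hcon
      set c := (hsurj x).choose
      set c' := (hsurj y).choose
      -- `y` lies between `v c (f x)` and `v c' (f x)`, so `y ∈ A (f x)`
      have hup : y ≤ v c' (f x) := by
        calc y = v c' (f y) := hfx y
        _ ≤ v c' (f x) := ((horder c' (f y) (f x)).2 hcon).le
      have hlo : v c (f x) ≤ y := by
        calc v c (f x) = x := (hfx x).symm
        _ ≤ y := hxy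
      obtain ⟨c'', hc''⟩ := hint (f x) c c' y hlo hup
      have : ((c' : Fin t), f y) = (c'', f x) := by
        apply hinj
        simpa using (hfx y).symm.trans hc''
      have : f y = f x := congrArg Prod.snd this
      exact absurd this (ne_of_lt hcon)
    · intro x y hGxy
      have hx := hfx x
      have hy := hfx y
      rw [hx, hy] at hGxy
      exact ((hadj _ _ _ _).1 hGxy).2
end

section
/- Every ordered graph is homomorphically equivalent to an ordered core, and this ordered core is unique up to order-isomorphism. -/
/-- A strictly monotone self-map of a finite linear order is the identity. -/
lemma strictMono_fix {α : Type*} [LinearOrder α] [Finite α] (f : α → α)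
    (hf : StrictMono f) (x : α) : f x = x := by
  have hsurj : Function.Surjective f :=
    Finite.surjective_of_injective hf.injective
  have e : α ≃o α := StrictMono.orderIsoOfSurjective f hf hsurj
  have : StrictMono.orderIsoOfSurjective f hf hsurj = OrderIso.refl α :=
    Subsingleton.elim _ _
  have h2 : (StrictMono.orderIsoOfSurjective f hf hsurj : α → α) x = (OrderIso.refl α : α → α) x := by rw [this]
  simpa [StrictMono.coe_orderIsoOfSurjective] using h2

/-- Some positive iterate of a self-map of a finite type is idempotent. -/
lemma exists_iterate_idem {α : Type*} [Finite α] (h : α → α) :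
    ∃ k, 0 < k ∧ ∀ x, h^[k] (h^[k] x) = h^[k] x := by
  obtain ⟨i, j, hij, hEq⟩ := Finite.exists_ne_map_eq_of_infinite (fun n : ℕ => h^[n])
  wlog hlt : i < j generalizing i j
  · exact this j i hij.symm hEq.symm (by omega)
  set p := j - i with hp
  have hp0 : 0 < p := by omega
  have key : ∀ m, i ≤ m → h^[m + p] = h^[m] := by
    intro m hm
    have : m + p = (m - i) + j := by omega
    rw [this, Function.iterate_add, ← hEq, ← Function.iterate_add,
      show m - i + i = m by omega]
  have key2 : ∀ t m, i ≤ m → h^[m + t * p] = h^[m] := by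
    intro t
    induction t with
    | zero => simp
    | succ t ih =>
      intro m hm
      have : m + (t + 1) * p = (m + p) + t * p := by ring
      rw [this, ih (m + p) (by omega), key m hm]
  refine ⟨p * (i + 1), by positivity, fun x => ?_⟩
  have hk : i ≤ p * (i + 1) := by nlinarith
  have : p * (i + 1) + p * (i + 1) = p * (i + 1) + (i + 1) * p := by ring
  have := key2 (i + 1) (p * (i + 1)) hk
  rw [← Function.iterate_add_apply, show p * (i+1) + p * (i+1) = p*(i+1) + (i+1)*p by ring,
    this]

/-- Transporting the core property along an order isomorphism. -/
lemma isOrderedCore_transport {V W : Type*} [LinearOrder V] [LinearOrder W]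
    (e : V ≃o W) (G : SimpleGraph V) (C : SimpleGraph W)
    (he : ∀ u v, G.Adj u v ↔ C.Adj (e u) (e v)) (hG : IsOrderedCore G) :
    IsOrderedCore C := by
  intro H hH ⟨r, hmono, hmem, hadj, hfix⟩
  have hadj' : ∀ u v, H.Adj (e u) (e v) → G.Adj u v := fun u v h =>
    (he u v).2 (H.adj_sub h)
  set H' : G.Subgraph :=
    { verts := e ⁻¹' H.verts
      Adj := fun u v => H.Adj (e u) (e v)
      adj_sub := fun h => hadj' _ _ h
      edge_vert := fun h => H.edge_vert h
      symm := ⟨fun u v h => H.symm.symm _ _ h⟩ } with hH'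
  have hH'ne : H' ≠ ⊤ := by
    intro htop
    apply hH
    ext w₁ w₂
    · simp only [SimpleGraph.Subgraph.verts_top, Set.mem_univ, iff_true]
      have : e.symm w₁ ∈ H'.verts := by rw [htop]; trivial
      simpa [hH'] using this
    · simp only [SimpleGraph.Subgraph.top_adj]
      constructor
      · exact fun h => H.adj_sub h
      · intro h
        have : H'.Adj (e.symm w₁) (e.symm w₂) := by
          rw [htop]; exact (he _ _).2 (by simpa using h)
        simpa [hH'] using this
  refine hG H' hH'ne ⟨e.symm ∘ r ∘ e, ?_, ?_, ?_, ?_⟩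
  · exact e.symm.monotone.comp (hmono.comp e.monotone)
  · intro x; simp [hH', Set.mem_preimage]; simpa using hmem (e x)
  · intro u v huv
    have := hadj (e u) (e v) ((he u v).1 huv)
    simpa [hH'] using this
  · intro x hx
    have : r (e x) = e x := hfix (e x) (by simpa [hH'] using hx)
    simp [this]

lemma OrderedHomEquiv.trans' {V W X : Type*} [Preorder V] [Preorder W] [Preorder X]
    {G : SimpleGraph V} {H : SimpleGraph W} {K : SimpleGraph X}
    (h1 : OrderedHomEquiv G H) (h2 : OrderedHomEquiv H K) : OrderedHomEquiv G K := by
  obtain ⟨⟨f, hf, hfh⟩, ⟨g, hg, hgh⟩⟩ := h1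
  obtain ⟨⟨f', hf', hfh'⟩, ⟨g', hg', hgh'⟩⟩ := h2
  exact ⟨⟨f' ∘ f, hf'.comp hf, fun u v h => hfh' _ _ (hfh _ _ h)⟩,
    ⟨g ∘ g', hg.comp hg', fun u v h => hgh _ _ (hgh' _ _ h)⟩⟩

/-- Any ordered homomorphism into a core and back composes to the identity. -/
lemma core_hom_fix {U W : Type*} [LinearOrder U] [Fintype U] [Preorder W]
    (C : SimpleGraph U) (D : SimpleGraph W) (hC : IsOrderedCore C)
    (f : U → W) (hf : Monotone f) (hfh : ∀ u v, C.Adj u v → D.Adj (f u) (f v))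
    (g : W → U) (hg : Monotone g) (hgh : ∀ u v, D.Adj u v → C.Adj (g u) (g v)) :
    ∀ x, g (f x) = x := by
  set h : U → U := g ∘ f with hh
  have hmono : Monotone h := hg.comp hf
  have hhom : ∀ u v, C.Adj u v → C.Adj (h u) (h v) :=
    fun u v huv => hgh _ _ (hfh _ _ huv)
  have hihom : ∀ (k : ℕ) (u v : U), C.Adj u v → C.Adj (h^[k] u) (h^[k] v) := by
    intro k
    induction k with
    | zero => set_option linter.unnecessarySimpa false in simpa using fun u v h => h
    | succ k ih =>
      intro u v huv
      rw [Function.iterate_succ_apply', Function.iterate_succ_apply']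
      exact hhom _ _ (ih u v huv)
  obtain ⟨k, hk0, hidem⟩ := exists_iterate_idem h
  set r : U → U := h^[k] with hr
  have hrmono : Monotone r := hmono.iterate k
  set HH : C.Subgraph :=
    { verts := Set.range r
      Adj := fun a b => ∃ u v, C.Adj u v ∧ r u = a ∧ r v = b
      adj_sub := by rintro a b ⟨u, v, huv, rfl, rfl⟩; exact hihom k u v huv
      edge_vert := by rintro a b ⟨u, v, huv, rfl, rfl⟩; exact ⟨u, rfl⟩
      symm := ⟨by rintro a b ⟨u, v, huv, rfl, rfl⟩; exact ⟨v, u, huv.symm, rfl, rfl⟩⟩ } with hHH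
  have hret : ∃ r' : U → U, Monotone r' ∧ (∀ x : U, r' x ∈ HH.verts) ∧
      (∀ u v : U, C.Adj u v → HH.Adj (r' u) (r' v)) ∧ (∀ x ∈ HH.verts, r' x = x) := by
    refine ⟨r, hrmono, fun x => ⟨x, rfl⟩, fun u v huv => ⟨u, v, huv, rfl, rfl⟩, ?_⟩
    rintro x ⟨y, rfl⟩
    exact hidem y
  have htop : HH = ⊤ := by
    by_contra hne
    exact hC HH hne hret
  have hsurj : Function.Surjective r := by
    intro x
    have : x ∈ HH.verts := by rw [htop]; trivial
    exact this
  have hrinj : Function.Injective r := Finite.injective_iff_surjective.mpr hsurj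
  have hinj : Function.Injective h := by
    obtain ⟨k', rfl⟩ : ∃ k', k = k' + 1 := ⟨k - 1, by omega⟩
    rw [hr, Function.iterate_succ] at hrinj
    exact Function.Injective.of_comp hrinj
  exact strictMono_fix h (hmono.strictMono_of_injective hinj)

lemma core_to_fin (V : Type) [LinearOrder V] [Fintype V] (G : SimpleGraph V)
    (hG : IsOrderedCore G) :
    ∃ (m : ℕ) (C : SimpleGraph (Fin m)), IsOrderedCore C ∧ OrderedHomEquiv G C := by
  set e : V ≃o Fin (Fintype.card V) := (monoEquivOfFin V rfl).symm with he0
  set C : SimpleGraph (Fin (Fintype.card V)) :=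
    { Adj := fun a b => G.Adj (e.symm a) (e.symm b)
      symm := ⟨fun a b h => h.symm⟩
      loopless := ⟨fun a h => G.loopless.irrefl _ h⟩ } with hC0
  have he : ∀ u v, G.Adj u v ↔ C.Adj (e u) (e v) := by
    intro u v; simp [hC0]
  refine ⟨_, C, isOrderedCore_transport e G C he hG, ?_, ?_⟩
  · exact ⟨e, e.monotone, fun u v h => (he u v).1 h⟩
  · refine ⟨e.symm, e.symm.monotone, fun u v h => ?_⟩
    simpa using h

lemma exists_ordered_core :
    ∀ (n : ℕ) (V : Type) [LinearOrder V] [Fintype V] (G : SimpleGraph V),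
      Fintype.card V ≤ n →
      ∃ (m : ℕ) (C : SimpleGraph (Fin m)), IsOrderedCore C ∧ OrderedHomEquiv G C := by
  intro n
  induction n with
  | zero =>
    intro V _ _ G hcard
    have hempty : IsEmpty V := Fintype.card_eq_zero_iff.mp (Nat.le_zero.mp hcard)
    refine core_to_fin V G ?_
    intro H hne _
    apply hne
    ext x y
    · exact (hempty.false x).elim
    · exact (hempty.false x).elim
  | succ n ih =>
    intro V _ _ G hcard
    by_cases hc : IsOrderedCore G
    · exact core_to_fin V G hc
    · classical
      rw [IsOrderedCore] at hc
      push_neg at hc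
      obtain ⟨H, hne, r, hmono, hmem, hadj, hfix⟩ := hc
      have hex : ∃ x, x ∉ H.verts := by
        by_contra hall
        push_neg at hall
        apply hne
        ext u v
        · simp [hall u]
        · simp only [SimpleGraph.Subgraph.top_adj]
          refine ⟨fun h => H.adj_sub h, fun h => ?_⟩
          have := hadj u v h
          rwa [hfix u (hall u), hfix v (hall v)] at this
      obtain ⟨x₀, hx₀⟩ := hex
      set G' : SimpleGraph ↥H.verts :=
        { Adj := fun a b => H.Adj a b
          symm := ⟨fun a b h => H.symm.symm _ _ h⟩
          loopless := ⟨fun a h => G.loopless.irrefl _ (H.adj_sub h)⟩ } with hG'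
      have hcard' : Fintype.card ↥H.verts ≤ n := by
        have h1 := Fintype.card_subtype_lt (p := fun x => x ∈ H.verts) hx₀
        have h2 : Fintype.card ↥H.verts < Fintype.card V := by convert h1
        omega
      obtain ⟨m, C, hcore, hequiv⟩ := ih ↥H.verts G' hcard'
      refine ⟨m, C, hcore, OrderedHomEquiv.trans' ?_ hequiv⟩
      constructor
      · refine ⟨fun x => ⟨r x, hmem x⟩, fun a b hab => ?_, fun u v huv => ?_⟩
        · exact hmono hab
        · exact hadj u v huv
      · exact ⟨Subtype.val, fun a b hab => hab, fun u v huv => H.adj_sub huv⟩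

/-- Every (finite) ordered graph is homomorphically equivalent to an ordered
core, and this ordered core is unique up to order-isomorphism. -/
theorem stmt15 {V : Type} [LinearOrder V] [Fintype V] (G : SimpleGraph V) :
    (∃ (n : ℕ) (C : SimpleGraph (Fin n)), IsOrderedCore C ∧ OrderedHomEquiv G C) ∧
    (∀ (U₁ U₂ : Type) (_ : LinearOrder U₁) (_ : Fintype U₁)
       (_ : LinearOrder U₂) (_ : Fintype U₂)
       (C₁ : SimpleGraph U₁) (C₂ : SimpleGraph U₂),
       IsOrderedCore C₁ → OrderedHomEquiv G C₁ →
       IsOrderedCore C₂ → OrderedHomEquiv G C₂ →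
       ∃ e : U₁ ≃o U₂, ∀ a b : U₁, C₁.Adj a b ↔ C₂.Adj (e a) (e b)) := by


  constructor
  · exact exists_ordered_core (Fintype.card V) V G le_rfl
  · intro U₁ U₂ i1 i2 i3 i4 C₁ C₂ h1 h2 h3 h4
    obtain ⟨⟨a, ha, hah⟩, ⟨b, hb, hbh⟩⟩ := h2
    obtain ⟨⟨c, hc, hch⟩, ⟨d, hd, hdh⟩⟩ := h4
    set f : U₁ → U₂ := c ∘ b with hf0
    set g : U₂ → U₁ := a ∘ d with hg0
    have hfmono : Monotone f := hc.comp hb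
    have hgmono : Monotone g := ha.comp hd
    have hfhom : ∀ u v, C₁.Adj u v → C₂.Adj (f u) (f v) :=
      fun u v h => hch _ _ (hbh _ _ h)
    have hghom : ∀ u v, C₂.Adj u v → C₁.Adj (g u) (g v) :=
      fun u v h => hah _ _ (hdh _ _ h)
    have hgf : ∀ x, g (f x) = x :=
      core_hom_fix C₁ C₂ h1 f hfmono hfhom g hgmono hghom
    have hfg : ∀ x, f (g x) = x :=
      core_hom_fix C₂ C₁ h3 g hgmono hghom f hfmono hfhom
    refine ⟨{ toFun := f, invFun := g, left_inv := hgf, right_inv := hfg,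
              map_rel_iff' := ?_ }, ?_⟩
    · intro p q
      refine ⟨fun h => ?_, fun h => hfmono h⟩
      have := hgmono h
      simpa [hgf p, hgf q] using this
    · intro p q
      refine ⟨fun h => hfhom _ _ h, fun h => ?_⟩
      have := hghom _ _ h
      simpa [hgf p, hgf q] using this
end

section
/- If an ordered graph G without isolated vertices admits an ordered homomorphism to some ordered matching, then G admits an ordered retraction to an ordered matching that is an ordered subgraph of G. -/
/-- If an ordered graph `G` without isolated vertices admits an ordered
homomorphism to some ordered matching `M`, then `G` admits an ordered
retraction to an ordered subgraph of `G` which is an ordered matching. -/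
theorem stmt16 {V W : Type*} [LinearOrder V] [Fintype V] [LinearOrder W]
    (G : SimpleGraph V) (hiso : ∀ x : V, ∃ y : V, G.Adj x y)
    (M : SimpleGraph W) (hM : IsOrderedMatching M)
    (f : V → W) (hmono : Monotone f)
    (hhom : ∀ u v : V, G.Adj u v → M.Adj (f u) (f v)) :
    ∃ H : G.Subgraph, (∀ x ∈ H.verts, ∃! y : V, H.Adj x y) ∧
      ∃ r : V → V, Monotone r ∧ (∀ x : V, r x ∈ H.verts) ∧
        (∀ u v : V, G.Adj u v → H.Adj (r u) (r v)) ∧ (∀ x ∈ H.verts, r x = x) := by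
  classical
  rcases isEmpty_or_nonempty V with hV | hV
  · exact ⟨⊥, fun x hx => (hV.false x).elim, id, monotone_id,
      fun x => (hV.false x).elim, fun u v h => (hV.false u).elim, fun x hx => rfl⟩
  obtain ⟨v0⟩ := hV
  set p : W → W := fun a => (hM a).choose with hp
  have hpadj : ∀ a, M.Adj a (p a) := fun a => (hM a).choose_spec.1
  have hpuniq : ∀ a b, M.Adj a b → b = p a := fun a b h => (hM a).choose_spec.2 b h
  have hpp : ∀ a, p (p a) = a := fun a => (hpuniq (p a) a (hpadj a).symm).symm
  have hane : ∀ a, a ≠ p a := fun a => (hpadj a).ne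
  set n : V → V := fun v => (hiso v).choose with hn
  have hnadj : ∀ v, G.Adj v (n v) := fun v => (hiso v).choose_spec
  have hfn : ∀ v, f (n v) = p (f v) := fun v => hpuniq _ _ (hhom _ _ (hnadj v))
  set m : W → W := fun a => min a (p a) with hm
  have hmm : ∀ a, m (p a) = m a := by
    intro a
    simp only [hm, hpp a]
    exact min_comm _ _
  have hmcases : ∀ a, m a = a ∨ m a = p a := by
    intro a
    simp only [hm]
    exact (min_cases a (p a)).imp And.left And.left
  set X : W → V := fun b => if h : ∃ v, f v = b then h.choose else v0 with hX
  have hfX : ∀ b, (∃ v, f v = b) → f (X b) = b := by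
    intro b h
    simp only [hX, dif_pos h]
    exact h.choose_spec
  set s : W → V := fun a => if a = m a then X (m a) else n (X (m a)) with hs
  have hsadj : ∀ a, G.Adj (s a) (s (p a)) := by
    intro a
    rcases hmcases a with h | h
    · have h1 : a = m a := h.symm
      have h2 : ¬ (p a = m (p a)) := by
        rw [hmm, ← h1]
        exact (hane a).symm
      simp only [hs, if_pos h1, if_neg h2, hmm]
      exact hnadj _
    · have h1 : ¬ (a = m a) := by
        rw [h]
        exact hane a
      have h2 : p a = m (p a) := by rw [hmm, h]
      simp only [hs, if_neg h1, if_pos h2, hmm]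
      exact (hnadj _).symm
  have hfs : ∀ a, (∃ v, f v = a) → f (s a) = a := by
    intro a ha
    have hpr : ∃ v, f v = p a := by
      obtain ⟨v, hv⟩ := ha
      exact ⟨n v, by rw [hfn, hv]⟩
    have hmr : ∃ v, f v = m a := by
      rcases hmcases a with h | h
      · rw [h]; exact ha
      · rw [h]; exact hpr
    by_cases h : a = m a
    · simp only [hs, if_pos h]
      rw [hfX _ hmr, ← h]
    · simp only [hs, if_neg h]
      rw [hfn, hfX _ hmr]
      rcases hmcases a with h' | h'
      · exact absurd h'.symm h
      · rw [h', hpp]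
  set r : V → V := fun v => s (f v) with hr
  have hfr : ∀ v, f (r v) = f v := by
    intro v
    simp only [hr]
    exact hfs _ ⟨v, rfl⟩
  have hrr : ∀ v, r (r v) = r v := by
    intro v
    simp only [hr]
    rw [hfs (f v) ⟨v, rfl⟩]
  have hrmono : Monotone r := by
    intro u v huv
    rcases eq_or_lt_of_le (hmono huv) with h | h
    · exact le_of_eq (by simp only [hr, h])
    · by_contra hlt
      push_neg at hlt
      have h2 := hmono hlt.le
      rw [hfr, hfr] at h2
      exact absurd h2 (not_le_of_gt h)
  refine ⟨{ verts := Set.range r,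
            Adj := fun u v => G.Adj u v ∧ u ∈ Set.range r ∧ v ∈ Set.range r,
            adj_sub := fun h => h.1,
            edge_vert := fun h => h.2.1,
            symm := ⟨fun u v h => ⟨h.1.symm, h.2.2, h.2.1⟩⟩ },
      ?_, r, hrmono, fun x => ⟨x, rfl⟩, ?_, ?_⟩
  · rintro x ⟨v, rfl⟩
    refine ⟨r (n v), ⟨?_, ⟨v, rfl⟩, ⟨n v, rfl⟩⟩, ?_⟩
    · simp only [hr, hfn]
      exact hsadj (f v)
    · rintro y ⟨hadj, -, ⟨w, rfl⟩⟩
      have h1 : M.Adj (f (r v)) (f (r w)) := hhom _ _ hadj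
      rw [hfr, hfr] at h1
      have h2 : f w = p (f v) := hpuniq _ _ h1
      simp only [hr, h2, hfn]
  · intro u v huv
    refine ⟨?_, ⟨u, rfl⟩, ⟨v, rfl⟩⟩
    have h2 : f v = p (f u) := hpuniq _ _ (hhom _ _ huv)
    simp only [hr, h2]
    exact hsadj (f u)
  · rintro x ⟨v, rfl⟩
    exact hrr v
end

section
/- If an ordered graph G without isolated vertices admits an ordered homomorphism to some ordered matching, then the ordered core of G is an ordered matching. -/
set_option linter.unusedSectionVars false

section Aux

variable {U W : Type} [LinearOrder U] [LinearOrder W]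

/-- The unique neighbour of a vertex in an ordered matching. -/
noncomputable def mPartner (M : SimpleGraph W) (hM : IsOrderedMatching M) (w : W) : W :=
  (hM w).choose

lemma mPartner_adj (M : SimpleGraph W) (hM : IsOrderedMatching M) (w : W) :
    M.Adj w (mPartner M hM w) := (hM w).choose_spec.1

lemma mPartner_eq (M : SimpleGraph W) (hM : IsOrderedMatching M) {w x : W}
    (h : M.Adj w x) : x = mPartner M hM w := (hM w).choose_spec.2 x h

/-- A chosen edge of `C` whose endpoints map under `φ` to `a` and `b`. -/
noncomputable def ePick (C : SimpleGraph U) (φ : U → W) (u0 : U) (a b : W) : U × U :=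
  @Classical.epsilon (U × U) ⟨(u0, u0)⟩
    (fun p => C.Adj p.1 p.2 ∧ φ p.1 = a ∧ φ p.2 = b)

lemma ePick_spec (C : SimpleGraph U) (φ : U → W) (u0 : U) {a b : W}
    (h : ∃ p : U × U, C.Adj p.1 p.2 ∧ φ p.1 = a ∧ φ p.2 = b) :
    C.Adj (ePick C φ u0 a b).1 (ePick C φ u0 a b).2 ∧
      φ (ePick C φ u0 a b).1 = a ∧ φ (ePick C φ u0 a b).2 = b :=
  @Classical.epsilon_spec (U × U) _ h

open Classical in
/-- A canonical representative in the fibre over `w` of a monotone homomorphism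
`φ : C → M`: if there is an edge of `C` joining the fibres over the matching
edge containing `w`, choose an endpoint of such an edge, otherwise any fibre
element. -/
noncomputable def pick0 (C : SimpleGraph U) (M : SimpleGraph W)
    (hM : IsOrderedMatching M) (φ : U → W) (u0 : U) (w : W) : U :=
  if (∃ p : U × U, C.Adj p.1 p.2 ∧ φ p.1 = min w (mPartner M hM w) ∧
      φ p.2 = max w (mPartner M hM w)) then
    (if w = min w (mPartner M hM w) then
      (ePick C φ u0 (min w (mPartner M hM w)) (max w (mPartner M hM w))).1
    else (ePick C φ u0 (min w (mPartner M hM w)) (max w (mPartner M hM w))).2)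
  else if h2 : ∃ z : U, φ z = w then h2.choose else u0

lemma pick0_fiber (C : SimpleGraph U) (M : SimpleGraph W)
    (hM : IsOrderedMatching M) (φ : U → W) (u0 : U) {w : W}
    (h2 : ∃ z : U, φ z = w) : φ (pick0 C M hM φ u0 w) = w := by
  have hne : w ≠ mPartner M hM w := (mPartner_adj M hM w).ne
  unfold pick0
  split_ifs with h h3
  · exact (ePick_spec C φ u0 h).2.1.trans h3.symm
  · rw [(ePick_spec C φ u0 h).2.2]
    rcases min_cases w (mPartner M hM w) with ⟨h5, _⟩ | ⟨h5, h6⟩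
    · exact absurd h5.symm h3
    · exact max_eq_left h6.le
  · exact h2.choose_spec

lemma pick0_adj (C : SimpleGraph U) (M : SimpleGraph W)
    (hM : IsOrderedMatching M) (φ : U → W) (u0 : U)
    (hφh : ∀ x y : U, C.Adj x y → M.Adj (φ x) (φ y))
    {x y : U} (h : C.Adj x y) :
    C.Adj (pick0 C M hM φ u0 (φ x)) (pick0 C M hM φ u0 (φ y)) := by
  have hM1 : M.Adj (φ x) (φ y) := hφh x y h
  have hp1 : mPartner M hM (φ x) = φ y := (mPartner_eq M hM hM1).symm
  have hp2 : mPartner M hM (φ y) = φ x := (mPartner_eq M hM hM1.symm).symm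
  have hne : φ x ≠ φ y := hM1.ne
  have hP : ∃ p : U × U, C.Adj p.1 p.2 ∧ φ p.1 = min (φ x) (φ y) ∧
      φ p.2 = max (φ x) (φ y) := by
    rcases le_total (φ x) (φ y) with hle | hle
    · exact ⟨(x, y), h, (min_eq_left hle).symm, (max_eq_right hle).symm⟩
    · exact ⟨(y, x), h.symm, (min_eq_right hle).symm, (max_eq_left hle).symm⟩
  have hPx : ∃ p : U × U, C.Adj p.1 p.2 ∧
      φ p.1 = min (φ x) (mPartner M hM (φ x)) ∧
      φ p.2 = max (φ x) (mPartner M hM (φ x)) := by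
    rw [hp1]; exact hP
  have hPy : ∃ p : U × U, C.Adj p.1 p.2 ∧
      φ p.1 = min (φ y) (mPartner M hM (φ y)) ∧
      φ p.2 = max (φ y) (mPartner M hM (φ y)) := by
    rw [hp2, min_comm (φ y) (φ x), max_comm (φ y) (φ x)]; exact hP
  have hee : ePick C φ u0 (min (φ x) (mPartner M hM (φ x)))
        (max (φ x) (mPartner M hM (φ x))) =
      ePick C φ u0 (min (φ y) (mPartner M hM (φ y)))
        (max (φ y) (mPartner M hM (φ y))) := by
    rw [hp1, hp2, min_comm (φ y) (φ x), max_comm (φ y) (φ x)]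
  have hspec := ePick_spec C φ u0 hPy
  unfold pick0
  rw [if_pos hPx, if_pos hPy]
  rcases lt_or_gt_of_ne hne with hlt | hlt
  · rw [if_pos (show φ x = min (φ x) (mPartner M hM (φ x)) by
        rw [hp1, min_eq_left hlt.le]),
      if_neg (show ¬(φ y = min (φ y) (mPartner M hM (φ y))) by
        rw [hp2, min_comm (φ y) (φ x), min_eq_left hlt.le]; exact hne.symm),
      hee]
    exact hspec.1
  · rw [if_neg (show ¬(φ x = min (φ x) (mPartner M hM (φ x))) by
        rw [hp1, min_eq_right hlt.le]; exact hne),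
      if_pos (show φ y = min (φ y) (mPartner M hM (φ y)) by
        rw [hp2, min_comm (φ y) (φ x), min_eq_right hlt.le]),
      hee]
    exact hspec.1.symm

open Classical in
/-- The retraction used in the uniqueness step: send every vertex to the
canonical representative of its fibre, where the fibres of `φ u` and of `φ v1`
get representatives `u` and `v1` respectively. -/
noncomputable def theR (C : SimpleGraph U) (M : SimpleGraph W)
    (hM : IsOrderedMatching M) (φ : U → W) (u v1 : U) : U → U :=
  fun x => if φ x = φ u then u else if φ x = φ v1 then v1
    else pick0 C M hM φ u (φ x)

lemma theR_congr (C : SimpleGraph U) (M : SimpleGraph W)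
    (hM : IsOrderedMatching M) (φ : U → W) (u v1 : U) {x y : U}
    (h : φ x = φ y) : theR C M hM φ u v1 x = theR C M hM φ u v1 y := by
  unfold theR
  rw [h]

lemma theR_fiber (C : SimpleGraph U) (M : SimpleGraph W)
    (hM : IsOrderedMatching M) (φ : U → W) (u v1 : U) (x : U) :
    φ (theR C M hM φ u v1 x) = φ x := by
  unfold theR
  split_ifs with h1 h2
  · exact h1.symm
  · exact h2.symm
  · exact pick0_fiber C M hM φ u ⟨x, rfl⟩

lemma theR_mono (C : SimpleGraph U) (M : SimpleGraph W)
    (hM : IsOrderedMatching M) (φ : U → W) (u v1 : U) (hφ : Monotone φ) :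
    Monotone (theR C M hM φ u v1) := by
  intro x y hxy
  by_contra hlt
  push_neg at hlt
  have h1 : φ y ≤ φ x := by
    have := hφ hlt.le
    rwa [theR_fiber C M hM φ u v1, theR_fiber C M hM φ u v1] at this
  have h2 : φ x = φ y := le_antisymm (hφ hxy) h1
  rw [theR_congr C M hM φ u v1 h2] at hlt
  exact absurd hlt (lt_irrefl _)

lemma theR_adj (C : SimpleGraph U) (M : SimpleGraph W)
    (hM : IsOrderedMatching M) (φ : U → W) (u v1 : U)
    (hφh : ∀ x y : U, C.Adj x y → M.Adj (φ x) (φ y)) (hv1 : C.Adj u v1)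
    {x y : U} (h : C.Adj x y) :
    C.Adj (theR C M hM φ u v1 x) (theR C M hM φ u v1 y) := by
  have huv : M.Adj (φ u) (φ v1) := hφh _ _ hv1
  have hxy : M.Adj (φ x) (φ y) := hφh _ _ h
  have hv1u : φ v1 ≠ φ u := huv.ne'
  unfold theR
  by_cases h1 : φ x = φ u
  · have hy : φ y = φ v1 := by
      have e1 : M.Adj (φ u) (φ y) := by rwa [h1] at hxy
      exact (mPartner_eq M hM e1).trans (mPartner_eq M hM huv).symm
    rw [if_pos h1, if_neg (by rw [hy]; exact hv1u), if_pos hy]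
    exact hv1
  · by_cases h2 : φ x = φ v1
    · have hy : φ y = φ u := by
        have e1 : M.Adj (φ v1) (φ y) := by rwa [h2] at hxy
        exact (mPartner_eq M hM e1).trans (mPartner_eq M hM huv.symm).symm
      rw [if_neg h1, if_pos h2, if_pos hy]
      exact hv1.symm
    · have hy1 : φ y ≠ φ u := by
        intro hc
        have e1 : M.Adj (φ u) (φ x) := by rw [← hc]; exact hxy.symm
        exact h2 ((mPartner_eq M hM e1).trans (mPartner_eq M hM huv).symm)
      have hy2 : φ y ≠ φ v1 := by
        intro hc
        have e1 : M.Adj (φ v1) (φ x) := by rw [← hc]; exact hxy.symm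
        exact h1 ((mPartner_eq M hM e1).trans (mPartner_eq M hM huv.symm).symm)
      rw [if_neg h1, if_neg h2, if_neg hy1, if_neg hy2]
      exact pick0_adj C M hM φ u hφh h

lemma theR_ne (C : SimpleGraph U) (M : SimpleGraph W)
    (hM : IsOrderedMatching M) (φ : U → W) (u v1 v2 : U)
    (hφh : ∀ x y : U, C.Adj x y → M.Adj (φ x) (φ y))
    (hv1 : C.Adj u v1) (hv2 : C.Adj u v2) (hne : v2 ≠ v1) (x : U) :
    theR C M hM φ u v1 x ≠ v2 := by
  have hφ2 : φ v2 = φ v1 :=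
    (mPartner_eq M hM (hφh _ _ hv2)).trans (mPartner_eq M hM (hφh _ _ hv1)).symm
  unfold theR
  split_ifs with h1 h2
  · exact hv2.ne
  · exact hne.symm
  · intro hc
    have hfib : φ (pick0 C M hM φ u (φ x)) = φ x := pick0_fiber C M hM φ u ⟨x, rfl⟩
    rw [hc, hφ2] at hfib
    exact h2 hfib.symm

end Aux

/-- If an ordered graph `G` without isolated vertices admits an ordered
homomorphism to some ordered matching, then the ordered core of `G` (i.e. any
ordered core homomorphically equivalent to `G`) is an ordered matching. -/
theorem stmt17 {V W : Type} [LinearOrder V] [Fintype V] [LinearOrder W]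
    (G : SimpleGraph V) (hiso : ∀ x : V, ∃ y : V, G.Adj x y)
    (M : SimpleGraph W) (hM : IsOrderedMatching M)
    (f : V → W) (hmono : Monotone f)
    (hhom : ∀ u v : V, G.Adj u v → M.Adj (f u) (f v)) :
    ∀ (U : Type) (_ : LinearOrder U) (_ : Fintype U) (C : SimpleGraph U),
      IsOrderedCore C → OrderedHomEquiv G C → IsOrderedMatching C := by
  intro U instU instF C hcore hequiv
  letI := instU
  letI := instF
  classical
  obtain ⟨⟨f₁, hf₁m, hf₁h⟩, ⟨g₁, hg₁m, hg₁h⟩⟩ := hequiv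
  set φ : U → W := f ∘ g₁ with hφdef
  have hφm : Monotone φ := hmono.comp hg₁m
  have hφh : ∀ x y : U, C.Adj x y → M.Adj (φ x) (φ y) :=
    fun x y h => hhom _ _ (hg₁h x y h)
  -- Step 1: no isolated vertices in C.
  have hex : ∀ x : U, ∃ y : U, C.Adj x y := by
    intro x
    by_contra hno
    push_neg at hno
    obtain ⟨y0, hy0⟩ := hiso (g₁ x)
    have hedge : C.Adj (f₁ (g₁ x)) (f₁ y0) := hf₁h _ _ hy0
    have hz : ∃ z : U, z ≠ x := by
      rcases eq_or_ne (f₁ (g₁ x)) x with hc | hc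
      · rw [hc] at hedge
        exact absurd hedge (hno _)
      · exact ⟨_, hc⟩
    obtain ⟨z, hzx⟩ := hz
    obtain ⟨u', hu'ne, hu'mono⟩ :
        ∃ u' : U, u' ≠ x ∧ Monotone (fun t => if t = x then u' else t) := by
      by_cases hA : (Finset.univ.filter (fun t : U => t < x)).Nonempty
      · set u' := (Finset.univ.filter (fun t : U => t < x)).max' hA with hu'
        have hlt : u' < x := by
          have := Finset.max'_mem _ hA
          simp only [Finset.mem_filter] at this
          exact this.2
        have hle : ∀ t : U, t < x → t ≤ u' := by
          intro t ht
          exact Finset.le_max' _ t (by simp [ht])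
        refine ⟨u', ne_of_lt hlt, ?_⟩
        intro s t hst
        dsimp only
        split_ifs with h1 h2 h2
        · exact le_refl _
        · subst h1
          exact le_trans hlt.le hst
        · subst h2
          exact hle s (lt_of_le_of_ne hst h1)
        · exact hst
      · have hxmin : ∀ t : U, x ≤ t := by
          intro t
          by_contra hlt
          push_neg at hlt
          exact hA ⟨t, by simp [hlt]⟩
        have hB : (Finset.univ.filter (fun t : U => t ≠ x)).Nonempty :=
          ⟨z, by simp [hzx]⟩
        set u' := (Finset.univ.filter (fun t : U => t ≠ x)).min' hB with hu'
        have hu'x : u' ≠ x := by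
          have := Finset.min'_mem _ hB
          simp only [Finset.mem_filter] at this
          exact this.2
        have hle : ∀ t : U, t ≠ x → u' ≤ t := by
          intro t ht
          exact Finset.min'_le _ t (by simp [ht])
        refine ⟨u', hu'x, ?_⟩
        intro s t hst
        dsimp only
        split_ifs with h1 h2 h2
        · exact le_refl _
        · exact hle t h2
        · subst h2
          exact absurd (le_antisymm hst (hxmin s)) h1
        · exact hst
    refine hcore
      { verts := {t | t ≠ x}
        Adj := fun p q => C.Adj p q ∧ p ≠ x ∧ q ≠ x
        adj_sub := fun h => h.1
        edge_vert := fun h => h.2.1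
        symm := ⟨fun p q h => ⟨h.1.symm, h.2.2, h.2.1⟩⟩ } ?_
      ⟨fun t => if t = x then u' else t, hu'mono, ?_, ?_, ?_⟩
    · intro hc
      have hv := congrArg SimpleGraph.Subgraph.verts hc
      rw [SimpleGraph.Subgraph.verts_top] at hv
      have hv' : ({t : U | t ≠ x} : Set U) = Set.univ := hv
      have hx : x ∈ {t : U | t ≠ x} := by rw [hv']; trivial
      exact hx rfl
    · intro t
      show (if t = x then u' else t) ∈ {t : U | t ≠ x}
      simp only [Set.mem_setOf_eq]
      split_ifs with h1
      · exact hu'ne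
      · exact h1
    · intro p q hpq
      have hp : p ≠ x := by
        intro hc
        rw [hc] at hpq
        exact hno q hpq
      have hq : q ≠ x := by
        intro hc
        rw [hc] at hpq
        exact hno p hpq.symm
      show C.Adj (if p = x then u' else p) (if q = x then u' else q) ∧
        (if p = x then u' else p) ≠ x ∧ (if q = x then u' else q) ≠ x
      rw [if_neg hp, if_neg hq]
      exact ⟨hpq, hp, hq⟩
    · intro t ht
      exact if_neg ht
  -- Step 2: uniqueness of neighbours.
  intro u
  obtain ⟨v1, hv1⟩ := hex u
  refine ⟨v1, hv1, ?_⟩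
  intro v2 hv2
  by_contra hne
  refine hcore
    { verts := Set.range (theR C M hM φ u v1)
      Adj := fun p q => C.Adj p q ∧ p ∈ Set.range (theR C M hM φ u v1) ∧
        q ∈ Set.range (theR C M hM φ u v1)
      adj_sub := fun h => h.1
      edge_vert := fun h => h.2.1
      symm := ⟨fun p q h => ⟨h.1.symm, h.2.2, h.2.1⟩⟩ } ?_
    ⟨theR C M hM φ u v1, theR_mono C M hM φ u v1 hφm, fun t => ⟨t, rfl⟩,
      fun a b hab => ⟨theR_adj C M hM φ u v1 hφh hv1 hab, ⟨a, rfl⟩, ⟨b, rfl⟩⟩, ?_⟩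
  · intro hc
    have hv := congrArg SimpleGraph.Subgraph.verts hc
    rw [SimpleGraph.Subgraph.verts_top] at hv
    have hv' : Set.range (theR C M hM φ u v1) = Set.univ := hv
    have hx : v2 ∈ Set.range (theR C M hM φ u v1) := by rw [hv']; trivial
    obtain ⟨t, ht⟩ := hx
    exact theR_ne C M hM φ u v1 v2 hφh hv1 hv2 hne t ht
  · rintro p ⟨t, rfl⟩
    exact theR_congr C M hM φ u v1 (theR_fiber C M hM φ u v1 t)
end

section
/- Let G be an ordered graph and let S and T be disjoint independent intervals of V(G) with every vertex of S smaller than every vertex of T, such that every edge of G incident to a vertex of S ∪ T has one endpoint in S and the other in T, and suppose there exist x ∈ S and y ∈ T with xy an edge of G. Then the map that fixes every vertex outside S ∪ T, sends every vertex of S to x, and sends every vertex of T to y is an ordered retraction of G onto the ordered subgraph of G induced by (V(G) ∖ (S ∪ T)) ∪ {x, y}. -/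
/-- Let `S` and `T` be disjoint independent intervals of an ordered graph `G`
with every vertex of `S` smaller than every vertex of `T`, such that every
edge of `G` incident to `S ∪ T` has one endpoint in `S` and the other in `T`,
and let `x ∈ S`, `y ∈ T` with `xy` an edge of `G`.  Then the map fixing all
vertices outside `S ∪ T`, sending `S` to `x` and `T` to `y`, is an ordered
retraction of `G` onto the ordered subgraph of `G` induced by
`(V(G) ∖ (S ∪ T)) ∪ {x, y}`. -/
theorem stmt18 {V : Type*} [LinearOrder V] (G : SimpleGraph V) (S T : Set V)
    [DecidablePred (· ∈ S)] [DecidablePred (· ∈ T)]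
    (hdisj : Disjoint S T)
    (hSint : ∀ a b c : V, a ∈ S → c ∈ S → a ≤ b → b ≤ c → b ∈ S)
    (hSind : ∀ a ∈ S, ∀ b ∈ S, ¬ G.Adj a b)
    (hTint : ∀ a b c : V, a ∈ T → c ∈ T → a ≤ b → b ≤ c → b ∈ T)
    (hTind : ∀ a ∈ T, ∀ b ∈ T, ¬ G.Adj a b)
    (hST : ∀ s ∈ S, ∀ t ∈ T, s < t)
    (hedge : ∀ u v : V, G.Adj u v → u ∈ S ∪ T →
      (u ∈ S ∧ v ∈ T) ∨ (u ∈ T ∧ v ∈ S))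
    (x : V) (hx : x ∈ S) (y : V) (hy : y ∈ T) (hxy : G.Adj x y) :
    Monotone (fun v : V => if v ∈ S then x else if v ∈ T then y else v) ∧
    (∀ v : V, (if v ∈ S then x else if v ∈ T then y else v) ∈
        (Set.univ \ (S ∪ T)) ∪ {x, y}) ∧
    (∀ u v : V, G.Adj u v →
      G.Adj (if u ∈ S then x else if u ∈ T then y else u)
        (if v ∈ S then x else if v ∈ T then y else v)) ∧
    (∀ v ∈ (Set.univ \ (S ∪ T)) ∪ ({x, y} : Set V),
      (if v ∈ S then x else if v ∈ T then y else v) = v) := by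

  have hxnT : x ∉ T := fun h => hdisj.ne_of_mem hx h rfl
  have hynS : y ∉ S := fun h => hdisj.ne_of_mem h hy rfl
  refine ⟨?_, ?_, ?_, ?_⟩
  · intro u v huv
    by_cases hu : u ∈ S <;> by_cases hv : v ∈ S <;> simp only [hu, hv, if_pos, if_neg]
    · exact le_refl x
    · by_cases hvT : v ∈ T
      · simp only [hvT, if_pos]
        exact (hST x hx y hy).le
      · simp only [hvT, if_neg]
        by_contra hlt
        exact hv (hSint u v x hu hx huv (le_of_not_ge hlt))
    · by_cases huT : u ∈ T
      · simp only [huT, if_pos]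
        exact absurd (hST v hv u huT) (not_lt.mpr huv)
      · simp only [huT, if_neg]
        by_contra hlt
        exact hu (hSint x u v hx hv (le_of_not_ge hlt) huv)
    · by_cases huT : u ∈ T <;> by_cases hvT : v ∈ T <;>
        simp only [huT, hvT, if_pos, if_neg]
      · exact le_refl y
      · by_contra hlt
        exact hvT (hTint u v y huT hy huv (le_of_not_ge hlt))
      · by_contra hlt
        exact huT (hTint y u v hy hvT (le_of_not_ge hlt) huv)
      · exact huv
  · intro v
    by_cases hv : v ∈ S
    · simp only [hv, if_pos]
      right; left; rfl
    · by_cases hvT : v ∈ T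
      · simp only [hv, hvT, if_neg, if_pos]
        right; right; rfl
      · simp only [hv, hvT, if_neg]
        left; exact ⟨trivial, fun h => h.elim hv hvT⟩
  · intro u v huv
    by_cases hu : u ∈ S
    · rcases hedge u v huv (Or.inl hu) with ⟨_, hvT⟩ | ⟨huT, _⟩
      · have hvS : v ∉ S := fun h => hdisj.ne_of_mem h hvT rfl
        simp only [hu, hvS, hvT, if_pos, if_neg]
        exact hxy
      · exact absurd huT (fun h => hdisj.ne_of_mem hu h rfl)
    · by_cases huT : u ∈ T
      · rcases hedge u v huv (Or.inr huT) with ⟨huS, _⟩ | ⟨_, hvS⟩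
        · exact absurd huS hu
        · simp only [hu, huT, hvS, if_pos, if_neg]
          exact hxy.symm
      · have hv : v ∉ S ∧ v ∉ T := by
          constructor <;> intro h
          · rcases hedge v u huv.symm (Or.inl h) with ⟨_, huT'⟩ | ⟨hvT', _⟩
            · exact huT huT'
            · exact hdisj.ne_of_mem h hvT' rfl
          · rcases hedge v u huv.symm (Or.inr h) with ⟨hvS', _⟩ | ⟨_, huS'⟩
            · exact hdisj.ne_of_mem hvS' h rfl
            · exact hu huS'
        simp only [hu, huT, hv.1, hv.2, if_neg]
        exact huv
  · intro v hv
    rcases hv with ⟨_, hv⟩ | hv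
    · have h1 : v ∉ S := fun h => hv (Or.inl h)
      have h2 : v ∉ T := fun h => hv (Or.inr h)
      simp [h1, h2]
    · rcases hv with rfl | rfl
      · simp only [hx, if_pos]
      · simp [hynS, hy]
end
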